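/- For any blocklength n and any (n,M)-code (f, φ₁, φ₂) for the Kaspi problem with memoryless source (Xⁿ,Yⁿ) i.i.d. ∼ P_{XY}, and any γ ≥ 0, the joint excess-distortion probability satisfies ε_nᴷ(D₁,D₂) ≥ Pr( Σ_{i=1}^n j_K(Xᵢ,Yᵢ|D₁,D₂,P_{XY}) ≥ log M + nγ ) − exp(−nγ). -/

import Mathlib

open scoped BigOperators Classical
open Finset

namespace Kaspi

/-- A probability mass function on a finite type. -/
def IsPMF {α : Type*} [Fintype α] (p : α → ℝ) : Prop :=
  (∀ a, 0 ≤ p a) ∧ ∑ a, p a = 1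

variable {X Y X1 X2 : Type*} [Fintype X] [Fintype Y] [Fintype X1] [Fintype X2]

/-- A joint probability mass function on `X × Y` (curried). -/
def IsPMF2 (P : X → Y → ℝ) : Prop :=
  (∀ x y, 0 ≤ P x y) ∧ ∑ x, ∑ y, P x y = 1

/-- A test channel `P_{X̂₁|XY}`. -/
def IsChan1 (W : X → Y → X1 → ℝ) : Prop := ∀ x y, IsPMF (W x y)

/-- A test channel `P_{X̂₂|XYX̂₁}`. -/
def IsChan2 (W : X → Y → X1 → X2 → ℝ) : Prop := ∀ x y a, IsPMF (W x y a)

/-- Induced reproduction marginal `P_{X̂₁}`. -/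
noncomputable def pA (P : X → Y → ℝ) (W1 : X → Y → X1 → ℝ) (a : X1) : ℝ :=
  ∑ x, ∑ y, P x y * W1 x y a

/-- Induced joint marginal `P_{Y X̂₁}`. -/
noncomputable def pYA (P : X → Y → ℝ) (W1 : X → Y → X1 → ℝ) (y : Y) (a : X1) : ℝ :=
  ∑ x, P x y * W1 x y a

/-- Induced conditional `P_{X̂₂|Y X̂₁}`. -/
noncomputable def pBgYA (P : X → Y → ℝ) (W1 : X → Y → X1 → ℝ) (W2 : X → Y → X1 → X2 → ℝ)
    (y : Y) (a : X1) (b : X2) : ℝ :=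
  (∑ x, P x y * W1 x y a * W2 x y a b) / pYA P W1 y a

/-- Mutual information `I(X,Y; X̂₁)`. -/
noncomputable def I1 (P : X → Y → ℝ) (W1 : X → Y → X1 → ℝ) : ℝ :=
  ∑ x, ∑ y, ∑ a, P x y * W1 x y a * Real.log (W1 x y a / pA P W1 a)

/-- Conditional mutual information `I(X; X̂₂ | Y, X̂₁)`. -/
noncomputable def I2 (P : X → Y → ℝ) (W1 : X → Y → X1 → ℝ) (W2 : X → Y → X1 → X2 → ℝ) : ℝ :=
  ∑ x, ∑ y, ∑ a, ∑ b,
    P x y * W1 x y a * W2 x y a b * Real.log (W2 x y a b / pBgYA P W1 W2 y a b)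

/-- Expected first distortion. -/
noncomputable def Ed1 (P : X → Y → ℝ) (W1 : X → Y → X1 → ℝ) (d1 : X → X1 → ℝ) : ℝ :=
  ∑ x, ∑ y, ∑ a, P x y * W1 x y a * d1 x a

/-- Expected second distortion. -/
noncomputable def Ed2 (P : X → Y → ℝ) (W1 : X → Y → X1 → ℝ) (W2 : X → Y → X1 → X2 → ℝ)
    (d2 : X → X2 → ℝ) : ℝ :=
  ∑ x, ∑ y, ∑ a, ∑ b, P x y * W1 x y a * W2 x y a b * d2 x b

/-- The Kaspi rate-distortion function `R_K(P_{XY}, D₁, D₂)`. -/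
noncomputable def RK (P : X → Y → ℝ) (d1 : X → X1 → ℝ) (d2 : X → X2 → ℝ) (D1 D2 : ℝ) : ℝ :=
  sInf { r | ∃ (W1 : X → Y → X1 → ℝ) (W2 : X → Y → X1 → X2 → ℝ),
    IsChan1 W1 ∧ IsChan2 W2 ∧ Ed1 P W1 d1 ≤ D1 ∧ Ed2 P W1 W2 d2 ≤ D2 ∧
    r = I1 P W1 + I2 P W1 W2 }

/-- `(W1, W2)` is a feasible pair achieving `R_K(P, D₁, D₂)`. -/
def Achieves (P : X → Y → ℝ) (d1 : X → X1 → ℝ) (d2 : X → X2 → ℝ) (D1 D2 : ℝ)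
    (W1 : X → Y → X1 → ℝ) (W2 : X → Y → X1 → X2 → ℝ) : Prop :=
  IsChan1 W1 ∧ IsChan2 W2 ∧ Ed1 P W1 d1 ≤ D1 ∧ Ed2 P W1 W2 d2 ≤ D2 ∧
    I1 P W1 + I2 P W1 W2 = RK P d1 d2 D1 D2

/-- `(λ₁, λ₂)` are dual-optimal multipliers for `R_K(P, D₁, D₂)`. -/
def DualOpt (P : X → Y → ℝ) (d1 : X → X1 → ℝ) (d2 : X → X2 → ℝ) (D1 D2 l1 l2 : ℝ) : Prop :=
  0 ≤ l1 ∧ 0 ≤ l2 ∧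
  RK P d1 d2 D1 D2 = sInf { r | ∃ (W1 : X → Y → X1 → ℝ) (W2 : X → Y → X1 → X2 → ℝ),
    IsChan1 W1 ∧ IsChan2 W2 ∧
    r = I1 P W1 + I2 P W1 W2 + l1 * (Ed1 P W1 d1 - D1) + l2 * (Ed2 P W1 W2 d2 - D2) }

/-- `α₂(x,y,x̂₁ | Q_{X̂₂|YX̂₁})`. -/
noncomputable def alpha2 (d2 : X → X2 → ℝ) (l2 : ℝ) (Q2 : Y → X1 → X2 → ℝ)
    (x : X) (y : Y) (a : X1) : ℝ :=
  (∑ b, Q2 y a b * Real.exp (-(l2 * d2 x b)))⁻¹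

/-- `α(x,y | Q_{X̂₁}, Q_{X̂₂|YX̂₁})`. -/
noncomputable def alpha (d1 : X → X1 → ℝ) (d2 : X → X2 → ℝ) (l1 l2 : ℝ)
    (Q1 : X1 → ℝ) (Q2 : Y → X1 → X2 → ℝ) (x : X) (y : Y) : ℝ :=
  (∑ a, Q1 a * Real.exp (-(l1 * d1 x a)) / alpha2 d2 l2 Q2 x y a)⁻¹

/-- The `(D₁,D₂)`-tilted information density for the Kaspi problem, built from
the marginals `Q1 = P*_{X̂₁}`, `Q2 = P*_{X̂₂|YX̂₁}` of an optimal test-channel pair. -/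
noncomputable def jK (d1 : X → X1 → ℝ) (d2 : X → X2 → ℝ) (l1 l2 D1 D2 : ℝ)
    (Q1 : X1 → ℝ) (Q2 : Y → X1 → X2 → ℝ) (x : X) (y : Y) : ℝ :=
  Real.log (alpha d1 d2 l1 l2 Q1 Q2 x y) - l1 * D1 - l2 * D2

end Kaspi

namespace Kaspi

set_option linter.unusedSectionVars false
set_option linter.unusedVariables false
section Aux

lemma gibbs {ι : Type*} [Fintype ι] (v q : ι → ℝ) (hv : ∀ i, 0 ≤ v i)
    (hsum : ∑ i, v i = 1) (hq : ∀ i, 0 ≤ q i) (hpos : ∀ i, 0 < v i → 0 < q i) :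
    -Real.log (∑ i, q i) ≤ ∑ i, v i * Real.log (v i / q i) := by
  obtain ⟨i0, hi0⟩ : ∃ i, 0 < v i := by
    by_contra h
    push_neg at h
    have h0 : ∑ i, v i = 0 := Finset.sum_eq_zero fun i _ => le_antisymm (h i) (hv i)
    rw [h0] at hsum; norm_num at hsum
  set c := ∑ i, q i with hc
  have hcpos : 0 < c :=
    lt_of_lt_of_le (hpos i0 hi0) (Finset.single_le_sum (fun i _ => hq i) (Finset.mem_univ i0))
  have h1 : ∀ i, v i - q i / c ≤ v i * Real.log (v i / q i) + v i * Real.log c := by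
    intro i
    rcases eq_or_lt_of_le (hv i) with h0 | h0
    · rw [← h0]; simpa using div_nonneg (hq i) hcpos.le
    · have hqi := hpos i h0
      have hx : 0 < q i / (v i * c) := by positivity
      have hle := Real.log_le_sub_one_of_pos hx
      have hlog : Real.log (q i / (v i * c)) = -(Real.log (v i / q i) + Real.log c) := by
        rw [Real.log_div (ne_of_gt hqi) (by positivity),
          Real.log_mul (ne_of_gt h0) (ne_of_gt hcpos),
          Real.log_div (ne_of_gt h0) (ne_of_gt hqi)]
        ring
      have h2 : v i * (q i / (v i * c)) = q i / c := by
        field_simp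
      nlinarith [mul_le_mul_of_nonneg_left hle (hv i)]
  have hsum2 : ∑ i, (v i - q i / c) ≤ ∑ i, (v i * Real.log (v i / q i) + v i * Real.log c) :=
    Finset.sum_le_sum fun i _ => h1 i
  rw [Finset.sum_sub_distrib, Finset.sum_add_distrib, ← Finset.sum_div, ← hc, hsum,
    ← Finset.sum_mul, hsum] at hsum2
  have : c / c = 1 := div_self (ne_of_gt hcpos)
  rw [this] at hsum2
  linarith

lemma gibbs_nonneg {ι : Type*} [Fintype ι] (v q : ι → ℝ) (hv : ∀ i, 0 ≤ v i)
    (hsum : ∑ i, v i = 1) (hq : ∀ i, 0 ≤ q i) (hqs : ∑ i, q i ≤ 1)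
    (hpos : ∀ i, 0 < v i → 0 < q i) :
    0 ≤ ∑ i, v i * Real.log (v i / q i) := by
  have h := gibbs v q hv hsum hq hpos
  have h2 : Real.log (∑ i, q i) ≤ 0 :=
    Real.log_nonpos (Finset.sum_nonneg fun i _ => hq i) hqs
  linarith

lemma sum_pos_exists {ι : Type*} [Fintype ι] (f : ι → ℝ) (hf : ∀ i, 0 ≤ f i)
    (h : 0 < ∑ i, f i) : ∃ i, 0 < f i := by
  by_contra hc
  push_neg at hc
  have : ∑ i, f i = 0 := Finset.sum_eq_zero fun i _ => le_antisymm (hc i) (hf i)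
  rw [this] at h; exact lt_irrefl 0 h

end Aux

section Basic

variable {X Y X1 X2 : Type*} [Fintype X] [Fintype Y] [Fintype X1] [Fintype X2]
variable {P : X → Y → ℝ} {W1 : X → Y → X1 → ℝ} {W2 : X → Y → X1 → X2 → ℝ}

lemma pA_nonneg (hP : ∀ x y, 0 ≤ P x y) (hW1 : IsChan1 W1) (a : X1) :
    0 ≤ pA P W1 a :=
  Finset.sum_nonneg fun x _ => Finset.sum_nonneg fun y _ =>
    mul_nonneg (hP x y) ((hW1 x y).1 a)

lemma pYA_nonneg (hP : ∀ x y, 0 ≤ P x y) (hW1 : IsChan1 W1) (y : Y) (a : X1) :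
    0 ≤ pYA P W1 y a :=
  Finset.sum_nonneg fun x _ => mul_nonneg (hP x y) ((hW1 x y).1 a)

lemma pA_sum (hP : IsPMF2 P) (hW1 : IsChan1 W1) : ∑ a, pA P W1 a = 1 := by
  unfold pA
  rw [Finset.sum_comm]
  have : ∀ x, ∑ a, ∑ y, P x y * W1 x y a = ∑ y, P x y := by
    intro x
    rw [Finset.sum_comm]
    exact Finset.sum_congr rfl fun y _ => by
      rw [← Finset.mul_sum, (hW1 x y).2, mul_one]
  rw [Finset.sum_congr rfl fun x _ => this x]
  exact hP.2

lemma pYA_le_pA (hP : ∀ x y, 0 ≤ P x y) (hW1 : IsChan1 W1) (y : Y) (a : X1) :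
    pYA P W1 y a ≤ pA P W1 a := by
  unfold pA pYA
  rw [Finset.sum_comm]
  exact Finset.single_le_sum
    (fun y' _ => Finset.sum_nonneg fun x _ => mul_nonneg (hP x y') ((hW1 x y').1 a))
    (Finset.mem_univ y)

lemma term_le_pYA (hP : ∀ x y, 0 ≤ P x y) (hW1 : IsChan1 W1) (x : X) (y : Y) (a : X1) :
    P x y * W1 x y a ≤ pYA P W1 y a :=
  Finset.single_le_sum (fun x' _ => mul_nonneg (hP x' y) ((hW1 x' y).1 a))
    (Finset.mem_univ x)

lemma term_le_pA (hP : ∀ x y, 0 ≤ P x y) (hW1 : IsChan1 W1) (x : X) (y : Y) (a : X1) :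
    P x y * W1 x y a ≤ pA P W1 a :=
  le_trans (term_le_pYA hP hW1 x y a) (pYA_le_pA hP hW1 y a)

lemma pBgYA_nonneg (hP : ∀ x y, 0 ≤ P x y) (hW1 : IsChan1 W1) (hW2 : IsChan2 W2)
    (y : Y) (a : X1) (b : X2) : 0 ≤ pBgYA P W1 W2 y a b :=
  div_nonneg
    (Finset.sum_nonneg fun x _ =>
      mul_nonneg (mul_nonneg (hP x y) ((hW1 x y).1 a)) ((hW2 x y a).1 b))
    (pYA_nonneg hP hW1 y a)

lemma pBgYA_row_sum_eq_one (hW2 : IsChan2 W2) {y : Y} {a : X1}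
    (h : pYA P W1 y a ≠ 0) : ∑ b, pBgYA P W1 W2 y a b = 1 := by
  unfold pBgYA
  rw [← Finset.sum_div]
  rw [Finset.sum_comm]
  have : ∀ x, ∑ b, P x y * W1 x y a * W2 x y a b = P x y * W1 x y a := by
    intro x; rw [← Finset.mul_sum, (hW2 x y a).2, mul_one]
  rw [Finset.sum_congr rfl fun x _ => this x]
  exact div_self h

lemma pBgYA_row_sum_le_one (hP : ∀ x y, 0 ≤ P x y) (hW1 : IsChan1 W1) (hW2 : IsChan2 W2)
    (y : Y) (a : X1) : ∑ b, pBgYA P W1 W2 y a b ≤ 1 := by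
  rcases eq_or_ne (pYA P W1 y a) 0 with h | h
  · have : ∀ b, pBgYA P W1 W2 y a b = 0 := by
      intro b; unfold pBgYA; rw [h, div_zero]
    rw [Finset.sum_congr rfl fun b _ => this b]
    simp
  · rw [pBgYA_row_sum_eq_one hW2 h]

lemma pBgYA_pos (hP : ∀ x y, 0 ≤ P x y) (hW1 : IsChan1 W1) (hW2 : IsChan2 W2)
    {x : X} {y : Y} {a : X1} {b : X2} (hp : 0 < P x y) (h1 : 0 < W1 x y a)
    (h2 : 0 < W2 x y a b) : 0 < pBgYA P W1 W2 y a b := by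
  apply div_pos
  · refine lt_of_lt_of_le (by positivity) (Finset.single_le_sum
      (fun x' _ => mul_nonneg (mul_nonneg (hP x' y) ((hW1 x' y).1 a)) ((hW2 x' y a).1 b))
      (Finset.mem_univ x))
  · exact lt_of_lt_of_le (by positivity) (term_le_pYA hP hW1 x y a)

end Basic
section SDef

variable {X Y X1 X2 : Type*} [Fintype X] [Fintype Y] [Fintype X1] [Fintype X2]

/-- inner tilted sum -/
noncomputable def s2F (d2 : X → X2 → ℝ) (l2 : ℝ) (Q2 : Y → X1 → X2 → ℝ)
    (x : X) (y : Y) (a : X1) : ℝ :=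
  ∑ b, Q2 y a b * Real.exp (-(l2 * d2 x b))

/-- outer tilted sum -/
noncomputable def SF (d1 : X → X1 → ℝ) (d2 : X → X2 → ℝ) (l1 l2 : ℝ)
    (Q1 : X1 → ℝ) (Q2 : Y → X1 → X2 → ℝ) (x : X) (y : Y) : ℝ :=
  ∑ a, Q1 a * Real.exp (-(l1 * d1 x a)) * s2F d2 l2 Q2 x y a

variable {P : X → Y → ℝ} {W1 : X → Y → X1 → ℝ} {W2 : X → Y → X1 → X2 → ℝ}
  {d1 : X → X1 → ℝ} {d2 : X → X2 → ℝ} {l1 l2 : ℝ}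
  {Q1 : X1 → ℝ} {Q2 : Y → X1 → X2 → ℝ}

lemma alpha_eq (d1 : X → X1 → ℝ) (d2 : X → X2 → ℝ) (l1 l2 : ℝ)
    (Q1 : X1 → ℝ) (Q2 : Y → X1 → X2 → ℝ) (x : X) (y : Y) :
    alpha d1 d2 l1 l2 Q1 Q2 x y = (SF d1 d2 l1 l2 Q1 Q2 x y)⁻¹ := by
  unfold alpha alpha2 SF s2F
  congr 1
  exact Finset.sum_congr rfl fun a _ => by rw [div_inv_eq_mul]

lemma s2F_nonneg (hQ2 : ∀ y a b, 0 ≤ Q2 y a b) (x : X) (y : Y) (a : X1) :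
    0 ≤ s2F d2 l2 Q2 x y a :=
  Finset.sum_nonneg fun b _ => mul_nonneg (hQ2 y a b) (Real.exp_pos _).le

lemma SF_nonneg (hQ1 : ∀ a, 0 ≤ Q1 a) (hQ2 : ∀ y a b, 0 ≤ Q2 y a b) (x : X) (y : Y) :
    0 ≤ SF d1 d2 l1 l2 Q1 Q2 x y :=
  Finset.sum_nonneg fun a _ =>
    mul_nonneg (mul_nonneg (hQ1 a) (Real.exp_pos _).le) (s2F_nonneg hQ2 x y a)

/-- the sum `SF` of the optimal marginals is positive on the support of `P`. -/
lemma SF_pos (hP : IsPMF2 P) (hW1 : IsChan1 W1) (hW2 : IsChan2 W2)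
    {x : X} {y : Y} (hp : 0 < P x y) :
    0 < SF d1 d2 l1 l2 (pA P W1) (pBgYA P W1 W2) x y := by
  obtain ⟨a, ha⟩ : ∃ a, 0 < pYA P W1 y a := by
    apply sum_pos_exists _ (fun a => pYA_nonneg hP.1 hW1 y a)
    have : ∑ a, pYA P W1 y a = ∑ x', P x' y := by
      unfold pYA
      rw [Finset.sum_comm]
      exact Finset.sum_congr rfl fun x' _ => by
        rw [← Finset.mul_sum, (hW1 x' y).2, mul_one]
    rw [this]
    exact lt_of_lt_of_le hp (Finset.single_le_sum (fun x' _ => hP.1 x' y) (Finset.mem_univ x))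
  have hQ1a : 0 < pA P W1 a := lt_of_lt_of_le ha (pYA_le_pA hP.1 hW1 y a)
  have hs2 : 0 < s2F d2 l2 (pBgYA P W1 W2) x y a := by
    obtain ⟨b, hb⟩ : ∃ b, 0 < pBgYA P W1 W2 y a b := by
      apply sum_pos_exists _ (fun b => pBgYA_nonneg hP.1 hW1 hW2 y a b)
      rw [pBgYA_row_sum_eq_one hW2 (ne_of_gt ha)]
      norm_num
    unfold s2F
    refine lt_of_lt_of_le (by positivity : (0:ℝ) < pBgYA P W1 W2 y a b * Real.exp (-(l2 * d2 x b)))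
      (Finset.single_le_sum (fun b' _ => mul_nonneg (pBgYA_nonneg hP.1 hW1 hW2 y a b')
        (Real.exp_pos (-(l2 * d2 x b'))).le) (Finset.mem_univ b))
  unfold SF
  refine lt_of_lt_of_le (by positivity : (0:ℝ) < pA P W1 a * Real.exp (-(l1 * d1 x a)) * s2F d2 l2 (pBgYA P W1 W2) x y a)
    (Finset.single_le_sum (fun a' _ => mul_nonneg (mul_nonneg (pA_nonneg hP.1 hW1 a')
      (Real.exp_pos (-(l1 * d1 x a'))).le) (s2F_nonneg (fun y' a'' b => pBgYA_nonneg hP.1 hW1 hW2 y' a'' b) x y a'))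
      (Finset.mem_univ a))

end SDef
section Lagr

variable {X Y X1 X2 : Type*} [Fintype X] [Fintype Y] [Fintype X1] [Fintype X2]
variable {P : X → Y → ℝ} {W1 : X → Y → X1 → ℝ} {W2 : X → Y → X1 → X2 → ℝ}
  {d1 : X → X1 → ℝ} {d2 : X → X2 → ℝ} {l1 l2 D1 D2 : ℝ}

lemma I1_nonneg (hP : IsPMF2 P) (hW1 : IsChan1 W1) : 0 ≤ I1 P W1 := by
  unfold I1
  refine Finset.sum_nonneg fun x _ => Finset.sum_nonneg fun y _ => ?_
  rcases eq_or_lt_of_le (hP.1 x y) with h | h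
  · exact Finset.sum_nonneg fun a _ => by rw [← h]; simp
  · have hg := gibbs_nonneg (W1 x y) (pA P W1) (hW1 x y).1 (hW1 x y).2
      (pA_nonneg hP.1 hW1) (le_of_eq (pA_sum hP hW1))
      (fun a ha => lt_of_lt_of_le (mul_pos h ha) (term_le_pA hP.1 hW1 x y a))
    simpa [Finset.mul_sum, mul_assoc] using mul_nonneg h.le hg

lemma I2_nonneg (hP : IsPMF2 P) (hW1 : IsChan1 W1) (hW2 : IsChan2 W2) :
    0 ≤ I2 P W1 W2 := by
  unfold I2
  refine Finset.sum_nonneg fun x _ => Finset.sum_nonneg fun y _ =>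
    Finset.sum_nonneg fun a _ => ?_
  rcases eq_or_lt_of_le (hP.1 x y) with h | h
  · exact Finset.sum_nonneg fun b _ => by rw [← h]; simp
  rcases eq_or_lt_of_le ((hW1 x y).1 a) with h1 | h1
  · exact Finset.sum_nonneg fun b _ => by rw [← h1]; simp
  · have hrow : ∑ b, pBgYA P W1 W2 y a b = 1 :=
      pBgYA_row_sum_eq_one hW2 (ne_of_gt (lt_of_lt_of_le (mul_pos h h1) (term_le_pYA hP.1 hW1 x y a)))
    have hg := gibbs_nonneg (W2 x y a) (pBgYA P W1 W2 y a) (hW2 x y a).1 (hW2 x y a).2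
      (fun b => pBgYA_nonneg hP.1 hW1 hW2 y a b) (le_of_eq hrow)
      (fun b hb => pBgYA_pos hP.1 hW1 hW2 h h1 hb)
    simpa [Finset.mul_sum, mul_assoc] using mul_nonneg (mul_pos h h1).le hg

lemma Ed1_nonneg (hP : ∀ x y, 0 ≤ P x y) (hW1 : IsChan1 W1) (hd1 : ∀ x a, 0 ≤ d1 x a) :
    0 ≤ Ed1 P W1 d1 :=
  Finset.sum_nonneg fun x _ => Finset.sum_nonneg fun y _ => Finset.sum_nonneg fun a _ =>
    mul_nonneg (mul_nonneg (hP x y) ((hW1 x y).1 a)) (hd1 x a)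

lemma Ed2_nonneg (hP : ∀ x y, 0 ≤ P x y) (hW1 : IsChan1 W1) (hW2 : IsChan2 W2)
    (hd2 : ∀ x b, 0 ≤ d2 x b) : 0 ≤ Ed2 P W1 W2 d2 :=
  Finset.sum_nonneg fun x _ => Finset.sum_nonneg fun y _ => Finset.sum_nonneg fun a _ =>
    Finset.sum_nonneg fun b _ =>
      mul_nonneg (mul_nonneg (mul_nonneg (hP x y) ((hW1 x y).1 a)) ((hW2 x y a).1 b)) (hd2 x b)

/-- the shifted Lagrangian -/
noncomputable def Lag (P : X → Y → ℝ) (W1 : X → Y → X1 → ℝ) (W2 : X → Y → X1 → X2 → ℝ)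
    (d1 : X → X1 → ℝ) (d2 : X → X2 → ℝ) (l1 l2 : ℝ) : ℝ :=
  I1 P W1 + I2 P W1 W2 + l1 * Ed1 P W1 d1 + l2 * Ed2 P W1 W2 d2

lemma Lag_min (hP : IsPMF2 P) (hd1 : ∀ x a, 0 ≤ d1 x a) (hd2 : ∀ x b, 0 ≤ d2 x b)
    (hdual : DualOpt P d1 d2 D1 D2 l1 l2)
    (hach : Achieves P d1 d2 D1 D2 W1 W2)
    (V1 : X → Y → X1 → ℝ) (V2 : X → Y → X1 → X2 → ℝ)
    (hV1 : IsChan1 V1) (hV2 : IsChan2 V2) :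
    Lag P W1 W2 d1 d2 l1 l2 ≤ Lag P V1 V2 d1 d2 l1 l2 := by
  obtain ⟨hl1, hl2, hRK⟩ := hdual
  obtain ⟨hW1, hW2, hEd1, hEd2, hIRK⟩ := hach
  set Sset : Set ℝ := { r | ∃ (U1 : X → Y → X1 → ℝ) (U2 : X → Y → X1 → X2 → ℝ),
    IsChan1 U1 ∧ IsChan2 U2 ∧
    r = I1 P U1 + I2 P U1 U2 + l1 * (Ed1 P U1 d1 - D1) + l2 * (Ed2 P U1 U2 d2 - D2) } with hS
  have hbdd : BddBelow Sset := by
    refine ⟨-(l1 * D1) - l2 * D2, fun r hr => ?_⟩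
    obtain ⟨U1, U2, hU1, hU2, hr⟩ := hr
    have h1 := I1_nonneg hP hU1
    have h2 := I2_nonneg hP hU1 hU2
    have h3 := mul_nonneg hl1 (Ed1_nonneg hP.1 hU1 hd1)
    have h4 := mul_nonneg hl2 (Ed2_nonneg hP.1 hU1 hU2 hd2)
    rw [hr]; ring_nf; nlinarith
  have hVmem : (I1 P V1 + I2 P V1 V2 + l1 * (Ed1 P V1 d1 - D1) + l2 * (Ed2 P V1 V2 d2 - D2)) ∈ Sset :=
    ⟨V1, V2, hV1, hV2, rfl⟩
  have hle : RK P d1 d2 D1 D2 ≤ I1 P V1 + I2 P V1 V2 + l1 * (Ed1 P V1 d1 - D1) + l2 * (Ed2 P V1 V2 d2 - D2) := by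
    rw [hRK]; exact csInf_le hbdd hVmem
  have h5 := mul_nonneg hl1 (sub_nonneg.mpr hEd1)
  have h6 := mul_nonneg hl2 (sub_nonneg.mpr hEd2)
  unfold Lag
  nlinarith [hle, hIRK]

end Lagr
section Golden

variable {X Y X1 X2 : Type*} [Fintype X] [Fintype Y] [Fintype X1] [Fintype X2]
variable {P : X → Y → ℝ} {W1 : X → Y → X1 → ℝ} {W2 : X → Y → X1 → X2 → ℝ}
  {d1 : X → X1 → ℝ} {d2 : X → X2 → ℝ} {l1 l2 : ℝ}

lemma golden (hP : IsPMF2 P) (hW1 : IsChan1 W1) (hW2 : IsChan2 W2) :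
    -∑ x, ∑ y, P x y * Real.log (SF d1 d2 l1 l2 (pA P W1) (pBgYA P W1 W2) x y)
      ≤ Lag P W1 W2 d1 d2 l1 l2 := by
  classical
  set Q1 := pA P W1 with hQ1
  set Q2 := pBgYA P W1 W2 with hQ2
  -- rewrite Lag as a double sum over (x,y)
  have hLag : Lag P W1 W2 d1 d2 l1 l2 = ∑ x, ∑ y,
      ((∑ a, P x y * W1 x y a * Real.log (W1 x y a / Q1 a))
      + (∑ a, ∑ b, P x y * W1 x y a * W2 x y a b * Real.log (W2 x y a b / Q2 y a b))
      + (∑ a, l1 * (P x y * W1 x y a * d1 x a))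
      + (∑ a, ∑ b, l2 * (P x y * W1 x y a * W2 x y a b * d2 x b))) := by
    unfold Lag I1 I2 Ed1 Ed2
    simp only [Finset.mul_sum]
    rw [← Finset.sum_add_distrib, ← Finset.sum_add_distrib, ← Finset.sum_add_distrib]
    refine Finset.sum_congr rfl fun x _ => ?_
    rw [← Finset.sum_add_distrib, ← Finset.sum_add_distrib, ← Finset.sum_add_distrib]
  rw [hLag, neg_le]
  rw [← Finset.sum_neg_distrib]
  refine Finset.sum_le_sum fun x _ => ?_
  rw [← Finset.sum_neg_distrib]
  refine Finset.sum_le_sum fun y _ => ?_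
  rw [neg_le]
  -- now per (x,y)
  rcases eq_or_lt_of_le (hP.1 x y) with hp | hp
  · simp [← hp]
  -- P x y > 0 : product Gibbs
  have hgibbs := gibbs (ι := X1 × X2)
    (fun p => W1 x y p.1 * W2 x y p.1 p.2)
    (fun p => Q1 p.1 * Real.exp (-(l1 * d1 x p.1)) * (Q2 y p.1 p.2 * Real.exp (-(l2 * d2 x p.2))))
    (fun p => mul_nonneg ((hW1 x y).1 p.1) ((hW2 x y p.1).1 p.2))
    (by
      rw [Fintype.sum_prod_type]
      calc (∑ a, ∑ b, W1 x y a * W2 x y a b) = ∑ a, W1 x y a := by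
            refine Finset.sum_congr rfl fun a _ => ?_
            rw [← Finset.mul_sum, (hW2 x y a).2, mul_one]
        _ = 1 := (hW1 x y).2)
    (fun p => mul_nonneg (mul_nonneg (pA_nonneg hP.1 hW1 p.1) (Real.exp_pos _).le)
      (mul_nonneg (pBgYA_nonneg hP.1 hW1 hW2 y p.1 p.2) (Real.exp_pos _).le))
    (by
      rintro ⟨a, b⟩ hv
      have h1 : 0 < W1 x y a := by
        rcases lt_or_eq_of_le ((hW1 x y).1 a) with h | h
        · exact h
        · exfalso; dsimp only at hv; rw [← h] at hv; simp at hv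
      have h2 : 0 < W2 x y a b := by
        rcases lt_or_eq_of_le ((hW2 x y a).1 b) with h | h
        · exact h
        · exfalso; dsimp only at hv; rw [← h] at hv; simp at hv
      have hQ1a : 0 < Q1 a := lt_of_lt_of_le (mul_pos hp h1) (term_le_pA hP.1 hW1 x y a)
      have hQ2b : 0 < Q2 y a b := pBgYA_pos hP.1 hW1 hW2 hp h1 h2
      positivity)
  -- identify ∑ q with SF
  have hq_eq : (∑ p : X1 × X2, Q1 p.1 * Real.exp (-(l1 * d1 x p.1)) *
      (Q2 y p.1 p.2 * Real.exp (-(l2 * d2 x p.2))))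
      = SF d1 d2 l1 l2 Q1 Q2 x y := by
    rw [Fintype.sum_prod_type]
    unfold SF s2F
    refine Finset.sum_congr rfl fun a _ => ?_
    rw [Finset.mul_sum]
  rw [hq_eq] at hgibbs
  -- identify ∑ v log (v/q) with the bracket
  have hv_eq : (∑ p : X1 × X2, (W1 x y p.1 * W2 x y p.1 p.2) *
        Real.log ((W1 x y p.1 * W2 x y p.1 p.2) /
          (Q1 p.1 * Real.exp (-(l1 * d1 x p.1)) * (Q2 y p.1 p.2 * Real.exp (-(l2 * d2 x p.2))))))
      = (∑ a, W1 x y a * Real.log (W1 x y a / Q1 a))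
      + (∑ a, ∑ b, W1 x y a * W2 x y a b * Real.log (W2 x y a b / Q2 y a b))
      + (∑ a, l1 * (W1 x y a * d1 x a))
      + (∑ a, ∑ b, l2 * (W1 x y a * W2 x y a b * d2 x b)) := by
    rw [Fintype.sum_prod_type]
    have hterm : ∀ a b, (W1 x y a * W2 x y a b) *
        Real.log ((W1 x y a * W2 x y a b) /
          (Q1 a * Real.exp (-(l1 * d1 x a)) * (Q2 y a b * Real.exp (-(l2 * d2 x b)))))
        = (W1 x y a * W2 x y a b) * Real.log (W1 x y a / Q1 a)
        + W1 x y a * W2 x y a b * Real.log (W2 x y a b / Q2 y a b)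
        + l1 * (W1 x y a * W2 x y a b * d1 x a)
        + l2 * (W1 x y a * W2 x y a b * d2 x b) := by
      intro a b
      rcases eq_or_lt_of_le ((hW1 x y).1 a) with h1 | h1
      · rw [← h1]; simp
      rcases eq_or_lt_of_le ((hW2 x y a).1 b) with h2 | h2
      · rw [← h2]; simp
      have hQ1a : 0 < Q1 a := lt_of_lt_of_le (mul_pos hp h1) (term_le_pA hP.1 hW1 x y a)
      have hQ2b : 0 < Q2 y a b := pBgYA_pos hP.1 hW1 hW2 hp h1 h2
      have e1 : (0:ℝ) < Real.exp (-(l1 * d1 x a)) := Real.exp_pos _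
      have e2 : (0:ℝ) < Real.exp (-(l2 * d2 x b)) := Real.exp_pos _
      rw [Real.log_div (by positivity) (by positivity),
        Real.log_mul (ne_of_gt h1) (ne_of_gt h2),
        Real.log_mul (by positivity) (by positivity),
        Real.log_mul (ne_of_gt hQ1a) (ne_of_gt e1),
        Real.log_mul (ne_of_gt hQ2b) (ne_of_gt e2),
        Real.log_exp, Real.log_exp,
        Real.log_div (ne_of_gt h1) (ne_of_gt hQ1a),
        Real.log_div (ne_of_gt h2) (ne_of_gt hQ2b)]
      ring
    calc (∑ a, ∑ b, (W1 x y a * W2 x y a b) *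
          Real.log ((W1 x y a * W2 x y a b) /
            (Q1 a * Real.exp (-(l1 * d1 x a)) * (Q2 y a b * Real.exp (-(l2 * d2 x b))))))
        = ∑ a, ∑ b, ((W1 x y a * W2 x y a b) * Real.log (W1 x y a / Q1 a)
          + W1 x y a * W2 x y a b * Real.log (W2 x y a b / Q2 y a b)
          + l1 * (W1 x y a * W2 x y a b * d1 x a)
          + l2 * (W1 x y a * W2 x y a b * d2 x b)) := by
          exact Finset.sum_congr rfl fun a _ => Finset.sum_congr rfl fun b _ => hterm a b
      _ = (∑ a, ∑ b, (W1 x y a * W2 x y a b) * Real.log (W1 x y a / Q1 a))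
          + (∑ a, ∑ b, W1 x y a * W2 x y a b * Real.log (W2 x y a b / Q2 y a b))
          + (∑ a, ∑ b, l1 * (W1 x y a * W2 x y a b * d1 x a))
          + (∑ a, ∑ b, l2 * (W1 x y a * W2 x y a b * d2 x b)) := by
          simp [Finset.sum_add_distrib]
      _ = _ := by
          have e1 : (∑ a, ∑ b, (W1 x y a * W2 x y a b) * Real.log (W1 x y a / Q1 a))
              = ∑ a, W1 x y a * Real.log (W1 x y a / Q1 a) := by
            refine Finset.sum_congr rfl fun a _ => ?_
            calc (∑ b, (W1 x y a * W2 x y a b) * Real.log (W1 x y a / Q1 a))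
                = ∑ b, W2 x y a b * (W1 x y a * Real.log (W1 x y a / Q1 a)) :=
                  Finset.sum_congr rfl fun b _ => by ring
              _ = (∑ b, W2 x y a b) * (W1 x y a * Real.log (W1 x y a / Q1 a)) := by
                  rw [Finset.sum_mul]
              _ = W1 x y a * Real.log (W1 x y a / Q1 a) := by rw [(hW2 x y a).2, one_mul]
          have e2 : (∑ a, ∑ b, l1 * (W1 x y a * W2 x y a b * d1 x a))
              = ∑ a, l1 * (W1 x y a * d1 x a) := by
            refine Finset.sum_congr rfl fun a _ => ?_
            calc (∑ b, l1 * (W1 x y a * W2 x y a b * d1 x a))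
                = ∑ b, W2 x y a b * (l1 * (W1 x y a * d1 x a)) :=
                  Finset.sum_congr rfl fun b _ => by ring
              _ = (∑ b, W2 x y a b) * (l1 * (W1 x y a * d1 x a)) := by rw [Finset.sum_mul]
              _ = l1 * (W1 x y a * d1 x a) := by rw [(hW2 x y a).2, one_mul]
          rw [e1, e2]
  rw [hv_eq] at hgibbs
  -- multiply by P x y > 0
  have := mul_le_mul_of_nonneg_left hgibbs hp.le
  calc -(P x y * Real.log (SF d1 d2 l1 l2 Q1 Q2 x y))
      = P x y * -Real.log (SF d1 d2 l1 l2 Q1 Q2 x y) := by ring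
    _ ≤ P x y * ((∑ a, W1 x y a * Real.log (W1 x y a / Q1 a))
        + (∑ a, ∑ b, W1 x y a * W2 x y a b * Real.log (W2 x y a b / Q2 y a b))
        + (∑ a, l1 * (W1 x y a * d1 x a))
        + (∑ a, ∑ b, l2 * (W1 x y a * W2 x y a b * d2 x b))) := this
    _ = (∑ a, P x y * W1 x y a * Real.log (W1 x y a / Q1 a))
        + (∑ a, ∑ b, P x y * W1 x y a * W2 x y a b * Real.log (W2 x y a b / Q2 y a b))
        + (∑ a, l1 * (P x y * W1 x y a * d1 x a))
        + (∑ a, ∑ b, l2 * (P x y * W1 x y a * W2 x y a b * d2 x b)) := by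
        rw [mul_add, mul_add, mul_add]
        have c1 : P x y * (∑ a, W1 x y a * Real.log (W1 x y a / Q1 a))
            = ∑ a, P x y * W1 x y a * Real.log (W1 x y a / Q1 a) := by
          rw [Finset.mul_sum]; exact Finset.sum_congr rfl fun a _ => by ring
        have c2 : P x y * (∑ a, ∑ b, W1 x y a * W2 x y a b * Real.log (W2 x y a b / Q2 y a b))
            = ∑ a, ∑ b, P x y * W1 x y a * W2 x y a b * Real.log (W2 x y a b / Q2 y a b) := by
          rw [Finset.mul_sum]; refine Finset.sum_congr rfl fun a _ => ?_
          rw [Finset.mul_sum]; exact Finset.sum_congr rfl fun b _ => by ring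
        have c3 : P x y * (∑ a, l1 * (W1 x y a * d1 x a))
            = ∑ a, l1 * (P x y * W1 x y a * d1 x a) := by
          rw [Finset.mul_sum]; exact Finset.sum_congr rfl fun a _ => by ring
        have c4 : P x y * (∑ a, ∑ b, l2 * (W1 x y a * W2 x y a b * d2 x b))
            = ∑ a, ∑ b, l2 * (P x y * W1 x y a * W2 x y a b * d2 x b) := by
          rw [Finset.mul_sum]; refine Finset.sum_congr rfl fun a _ => ?_
          rw [Finset.mul_sum]; exact Finset.sum_congr rfl fun b _ => by ring
        rw [c1, c2, c3, c4]

end Golden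
section Tilted

variable {X Y X1 X2 : Type*} [Fintype X] [Fintype Y] [Fintype X1] [Fintype X2]
variable {P : X → Y → ℝ} {W1 : X → Y → X1 → ℝ} {W2 : X → Y → X1 → X2 → ℝ}
  {d1 : X → X1 → ℝ} {d2 : X → X2 → ℝ} {l1 l2 : ℝ}

lemma sum_swap3 (t : X → Y → X1 → ℝ) :
    ∑ x, ∑ y, ∑ a, t x y a = ∑ a, ∑ x, ∑ y, t x y a := by
  calc ∑ x, ∑ y, ∑ a, t x y a = ∑ x, ∑ a, ∑ y, t x y a :=
        Finset.sum_congr rfl fun x _ => Finset.sum_comm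
    _ = ∑ a, ∑ x, ∑ y, t x y a := Finset.sum_comm

lemma sum_swap4 (t : X → Y → X1 → X2 → ℝ) :
    ∑ x, ∑ y, ∑ a, ∑ b, t x y a b = ∑ y, ∑ a, ∑ b, ∑ x, t x y a b := by
  calc ∑ x, ∑ y, ∑ a, ∑ b, t x y a b = ∑ y, ∑ x, ∑ a, ∑ b, t x y a b :=
        Finset.sum_comm
    _ = ∑ y, ∑ a, ∑ x, ∑ b, t x y a b :=
        Finset.sum_congr rfl fun y _ => Finset.sum_comm
    _ = ∑ y, ∑ a, ∑ b, ∑ x, t x y a b :=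
        Finset.sum_congr rfl fun y _ => Finset.sum_congr rfl fun a _ => Finset.sum_comm

lemma tilted (hP : IsPMF2 P) (hW1 : IsChan1 W1) (hW2 : IsChan2 W2)
    (R1 : X1 → ℝ) (R2 : Y → X1 → X2 → ℝ)
    (hR1 : ∀ a, 0 ≤ R1 a) (hR1s : ∑ a, R1 a ≤ 1)
    (hR2 : ∀ y a b, 0 ≤ R2 y a b) (hR2s : ∀ y a, ∑ b, R2 y a b ≤ 1)
    (hSpos : ∀ x y, 0 < P x y → 0 < SF d1 d2 l1 l2 R1 R2 x y) :
    ∃ (V1 : X → Y → X1 → ℝ) (V2 : X → Y → X1 → X2 → ℝ), IsChan1 V1 ∧ IsChan2 V2 ∧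
      Lag P V1 V2 d1 d2 l1 l2 ≤ -∑ x, ∑ y, P x y * Real.log (SF d1 d2 l1 l2 R1 R2 x y) := by
  classical
  set s2 := s2F d2 l2 R2 with hs2def
  set S := SF d1 d2 l1 l2 R1 R2 with hSdef
  set V2 : X → Y → X1 → X2 → ℝ := fun x y a b =>
    if 0 < s2 x y a then R2 y a b * Real.exp (-(l2 * d2 x b)) / s2 x y a else W2 x y a b
    with hV2def
  set V1 : X → Y → X1 → ℝ := fun x y a =>
    if 0 < S x y then R1 a * Real.exp (-(l1 * d1 x a)) * s2 x y a / S x y else W1 x y a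
    with hV1def
  have hs2nn : ∀ x y a, 0 ≤ s2 x y a := fun x y a => s2F_nonneg hR2 x y a
  have hV2chan : IsChan2 V2 := by
    intro x y a
    constructor
    · intro b
      simp only [hV2def]
      split_ifs with h
      · exact div_nonneg (mul_nonneg (hR2 y a b) (Real.exp_pos _).le) h.le
      · exact (hW2 x y a).1 b
    · simp only [hV2def]
      split_ifs with h
      · rw [← Finset.sum_div]
        have hnum : (∑ b, R2 y a b * Real.exp (-(l2 * d2 x b))) = s2 x y a := by
          rw [hs2def]; rfl
        rw [hnum]
        exact div_self (ne_of_gt h)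
      · exact (hW2 x y a).2
  have hV1chan : IsChan1 V1 := by
    intro x y
    constructor
    · intro a
      simp only [hV1def]
      split_ifs with h
      · exact div_nonneg (mul_nonneg (mul_nonneg (hR1 a) (Real.exp_pos _).le) (hs2nn x y a)) h.le
      · exact (hW1 x y).1 a
    · simp only [hV1def]
      split_ifs with h
      · rw [← Finset.sum_div]
        have hnum : (∑ a, R1 a * Real.exp (-(l1 * d1 x a)) * s2 x y a) = S x y := by
          rw [hSdef, hs2def]; rfl
        rw [hnum]
        exact div_self (ne_of_gt h)
      · exact (hW1 x y).2
  refine ⟨V1, V2, hV1chan, hV2chan, ?_⟩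
  -- basic positivity extraction
  have hV1pos : ∀ {x y a}, 0 < P x y → 0 < V1 x y a →
      0 < R1 a ∧ 0 < s2 x y a ∧ V1 x y a = R1 a * Real.exp (-(l1 * d1 x a)) * s2 x y a / S x y := by
    intro x y a hp hv
    have hS := hSpos x y hp
    have hv' : V1 x y a = R1 a * Real.exp (-(l1 * d1 x a)) * s2 x y a / S x y := by
      simp only [hV1def]; rw [if_pos hS]
    rw [hv'] at hv
    constructor
    · by_contra hc
      push_neg at hc
      have : R1 a = 0 := le_antisymm hc (hR1 a)
      rw [this] at hv; simp at hv
    constructor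
    · by_contra hc
      push_neg at hc
      have : s2 x y a = 0 := le_antisymm hc (hs2nn x y a)
      rw [this] at hv; simp at hv
    · exact hv'
  have hV2pos : ∀ {x y a b}, 0 < s2 x y a → 0 < V2 x y a b →
      0 < R2 y a b ∧ V2 x y a b = R2 y a b * Real.exp (-(l2 * d2 x b)) / s2 x y a := by
    intro x y a b hs hv
    have hv' : V2 x y a b = R2 y a b * Real.exp (-(l2 * d2 x b)) / s2 x y a := by
      simp only [hV2def]; rw [if_pos hs]
    rw [hv'] at hv
    constructor
    · by_contra hc
      push_neg at hc
      have : R2 y a b = 0 := le_antisymm hc (hR2 y a b)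
      rw [this] at hv; simp at hv
    · exact hv'
  -- step (a): I1 V1 ≤ C1
  have stepA : I1 P V1 ≤ ∑ x, ∑ y, ∑ a, P x y * V1 x y a * Real.log (V1 x y a / R1 a) := by
    rw [← sub_nonneg]
    have hdiff : (∑ x, ∑ y, ∑ a, P x y * V1 x y a * Real.log (V1 x y a / R1 a)) - I1 P V1
        = ∑ a, pA P V1 a * Real.log (pA P V1 a / R1 a) := by
      unfold I1
      rw [← Finset.sum_sub_distrib]
      simp only [← Finset.sum_sub_distrib]
      rw [sum_swap3 (fun x y a => P x y * V1 x y a * Real.log (V1 x y a / R1 a)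
        - P x y * V1 x y a * Real.log (V1 x y a / pA P V1 a))]
      refine Finset.sum_congr rfl fun a _ => ?_
      have : ∀ x y, P x y * V1 x y a * Real.log (V1 x y a / R1 a)
          - P x y * V1 x y a * Real.log (V1 x y a / pA P V1 a)
          = P x y * V1 x y a * Real.log (pA P V1 a / R1 a) := by
        intro x y
        rcases eq_or_lt_of_le (mul_nonneg (hP.1 x y) ((hV1chan x y).1 a)) with h0 | h0
        · rw [← h0]; ring
        · have hpxy : 0 < P x y := by
            rcases eq_or_lt_of_le (hP.1 x y) with h | h
            · exfalso; rw [← h] at h0; simp at h0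
            · exact h
          have hv : 0 < V1 x y a := by
            rcases eq_or_lt_of_le ((hV1chan x y).1 a) with h | h
            · exfalso; rw [← h] at h0; simp at h0
            · exact h
          obtain ⟨hR1a, _, _⟩ := hV1pos hpxy hv
          have hpa : 0 < pA P V1 a := lt_of_lt_of_le h0 (term_le_pA hP.1 hV1chan x y a)
          rw [Real.log_div (ne_of_gt hv) (ne_of_gt hR1a),
            Real.log_div (ne_of_gt hv) (ne_of_gt hpa),
            Real.log_div (ne_of_gt hpa) (ne_of_gt hR1a)]
          ring
      rw [Finset.sum_congr rfl fun x _ => Finset.sum_congr rfl fun y _ => this x y]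
      unfold pA
      rw [Finset.sum_mul]
      refine Finset.sum_congr rfl fun x _ => ?_
      rw [Finset.sum_mul]
    rw [hdiff]
    refine gibbs_nonneg (pA P V1) R1 (pA_nonneg hP.1 hV1chan) (pA_sum hP hV1chan) hR1 hR1s ?_
    intro a ha
    obtain ⟨x, hx⟩ := sum_pos_exists _ (fun x => Finset.sum_nonneg fun y _ =>
      mul_nonneg (hP.1 x y) ((hV1chan x y).1 a)) ha
    obtain ⟨y, hy⟩ := sum_pos_exists _ (fun y => mul_nonneg (hP.1 x y) ((hV1chan x y).1 a)) hx
    have hpxy : 0 < P x y := by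
      rcases eq_or_lt_of_le (hP.1 x y) with h | h
      · exfalso; rw [← h] at hy; simp at hy
      · exact h
    have hv : 0 < V1 x y a := by
      rcases eq_or_lt_of_le ((hV1chan x y).1 a) with h | h
      · exfalso; rw [← h] at hy; simp at hy
      · exact h
    exact (hV1pos hpxy hv).1
  -- step (b): I2 V ≤ C2
  have pos3 : ∀ {p q r : ℝ}, 0 ≤ p → 0 ≤ q → 0 ≤ r → 0 < p * q * r →
      0 < p ∧ 0 < q ∧ 0 < r := by
    intro p q r hp hq hr h
    refine ⟨lt_of_le_of_ne hp fun h0 => by rw [← h0] at h; simp at h,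
      lt_of_le_of_ne hq fun h0 => by rw [← h0] at h; simp at h,
      lt_of_le_of_ne hr fun h0 => by rw [← h0] at h; simp at h⟩
  have stepB : I2 P V1 V2 ≤
      ∑ x, ∑ y, ∑ a, ∑ b, P x y * V1 x y a * V2 x y a b * Real.log (V2 x y a b / R2 y a b) := by
    rw [← sub_nonneg]
    have hdiff : (∑ x, ∑ y, ∑ a, ∑ b,
        P x y * V1 x y a * V2 x y a b * Real.log (V2 x y a b / R2 y a b)) - I2 P V1 V2
        = ∑ y, ∑ a, pYA P V1 y a *
            (∑ b, pBgYA P V1 V2 y a b * Real.log (pBgYA P V1 V2 y a b / R2 y a b)) := by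
      unfold I2
      simp only [← Finset.sum_sub_distrib]
      rw [sum_swap4 (fun x y a b => P x y * V1 x y a * V2 x y a b * Real.log (V2 x y a b / R2 y a b)
        - P x y * V1 x y a * V2 x y a b * Real.log (V2 x y a b / pBgYA P V1 V2 y a b))]
      refine Finset.sum_congr rfl fun y _ => Finset.sum_congr rfl fun a _ => ?_
      rw [Finset.mul_sum]
      refine Finset.sum_congr rfl fun b _ => ?_
      have hterm : ∀ x, P x y * V1 x y a * V2 x y a b * Real.log (V2 x y a b / R2 y a b)
          - P x y * V1 x y a * V2 x y a b * Real.log (V2 x y a b / pBgYA P V1 V2 y a b)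
          = P x y * V1 x y a * V2 x y a b * Real.log (pBgYA P V1 V2 y a b / R2 y a b) := by
        intro x
        rcases eq_or_lt_of_le (mul_nonneg (mul_nonneg (hP.1 x y) ((hV1chan x y).1 a))
          ((hV2chan x y a).1 b)) with h0 | h0
        · rw [← h0]; ring
        · obtain ⟨hp2, hv2⟩ := pos3 (hP.1 x y) ((hV1chan x y).1 a) ((hV2chan x y a).1 b) h0
          obtain ⟨hv1, hv2'⟩ := hv2
          obtain ⟨hR1a, hs2a, _⟩ := hV1pos hp2 hv1
          obtain ⟨hR2b, _⟩ := hV2pos hs2a hv2'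
          have hQB : 0 < pBgYA P V1 V2 y a b := pBgYA_pos hP.1 hV1chan hV2chan hp2 hv1 hv2'
          rw [Real.log_div (ne_of_gt hv2') (ne_of_gt hR2b),
            Real.log_div (ne_of_gt hv2') (ne_of_gt hQB),
            Real.log_div (ne_of_gt hQB) (ne_of_gt hR2b)]
          ring
      rw [Finset.sum_congr rfl fun x _ => hterm x]
      have hjoint : ∑ x, P x y * V1 x y a * V2 x y a b
          = pYA P V1 y a * pBgYA P V1 V2 y a b := by
        unfold pBgYA
        rcases eq_or_ne (pYA P V1 y a) 0 with h | h
        · rw [h, zero_mul]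
          have hle : ∑ x, P x y * V1 x y a * V2 x y a b ≤ pYA P V1 y a := by
            unfold pYA
            refine Finset.sum_le_sum fun x _ => ?_
            have hb2 : V2 x y a b ≤ 1 := by
              rw [← (hV2chan x y a).2]
              exact Finset.single_le_sum (fun b' _ => (hV2chan x y a).1 b') (Finset.mem_univ b)
            nlinarith [mul_nonneg (hP.1 x y) ((hV1chan x y).1 a), (hV2chan x y a).1 b]
          have hge : 0 ≤ ∑ x, P x y * V1 x y a * V2 x y a b :=
            Finset.sum_nonneg fun x _ => mul_nonneg (mul_nonneg (hP.1 x y)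
              ((hV1chan x y).1 a)) ((hV2chan x y a).1 b)
          rw [h] at hle
          linarith
        · rw [mul_div_cancel₀ _ h]
      rw [← Finset.sum_mul, hjoint]
      ring
    rw [hdiff]
    refine Finset.sum_nonneg fun y _ => Finset.sum_nonneg fun a _ => ?_
    rcases eq_or_lt_of_le (pYA_nonneg hP.1 hV1chan y a) with h | h
    · rw [← h, zero_mul]
    refine mul_nonneg h.le ?_
    refine gibbs_nonneg (pBgYA P V1 V2 y a) (R2 y a)
      (fun b => pBgYA_nonneg hP.1 hV1chan hV2chan y a b)
      (pBgYA_row_sum_eq_one hV2chan (ne_of_gt h)) (hR2 y a) (hR2s y a) ?_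
    intro b hb
    have hnum : 0 < ∑ x, P x y * V1 x y a * V2 x y a b := by
      have : pBgYA P V1 V2 y a b * pYA P V1 y a = ∑ x, P x y * V1 x y a * V2 x y a b := by
        unfold pBgYA
        rw [div_mul_cancel₀ _ (ne_of_gt h)]
      rw [← this]
      positivity
    obtain ⟨x, hx⟩ := sum_pos_exists _ (fun x => mul_nonneg (mul_nonneg (hP.1 x y)
      ((hV1chan x y).1 a)) ((hV2chan x y a).1 b)) hnum
    obtain ⟨hp2, hv1, hv2'⟩ := pos3 (hP.1 x y) ((hV1chan x y).1 a) ((hV2chan x y a).1 b) hx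
    obtain ⟨hR1a, hs2a, _⟩ := hV1pos hp2 hv1
    exact (hV2pos hs2a hv2').1
  -- step (c): exact value of the cross Lagrangian
  have stepC : (∑ x, ∑ y, ∑ a, P x y * V1 x y a * Real.log (V1 x y a / R1 a))
      + (∑ x, ∑ y, ∑ a, ∑ b, P x y * V1 x y a * V2 x y a b * Real.log (V2 x y a b / R2 y a b))
      + l1 * Ed1 P V1 d1 + l2 * Ed2 P V1 V2 d2
      = -∑ x, ∑ y, P x y * Real.log (S x y) := by
    unfold Ed1 Ed2
    simp only [Finset.mul_sum]
    rw [← Finset.sum_add_distrib, ← Finset.sum_add_distrib, ← Finset.sum_add_distrib,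
      ← Finset.sum_neg_distrib]
    refine Finset.sum_congr rfl fun x _ => ?_
    rw [← Finset.sum_add_distrib, ← Finset.sum_add_distrib, ← Finset.sum_add_distrib,
      ← Finset.sum_neg_distrib]
    refine Finset.sum_congr rfl fun y _ => ?_
    rcases eq_or_lt_of_le (hP.1 x y) with hp | hp
    · simp [← hp]
    have hS := hSpos x y hp
    -- factor P x y out
    have c1 : (∑ a, P x y * V1 x y a * Real.log (V1 x y a / R1 a))
        = P x y * ∑ a, V1 x y a * Real.log (V1 x y a / R1 a) := by
      rw [Finset.mul_sum]; exact Finset.sum_congr rfl fun a _ => by ring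
    have c2 : (∑ a, ∑ b, P x y * V1 x y a * V2 x y a b * Real.log (V2 x y a b / R2 y a b))
        = P x y * ∑ a, ∑ b, V1 x y a * V2 x y a b * Real.log (V2 x y a b / R2 y a b) := by
      rw [Finset.mul_sum]
      refine Finset.sum_congr rfl fun a _ => ?_
      rw [Finset.mul_sum]; exact Finset.sum_congr rfl fun b _ => by ring
    have c3 : (∑ a, l1 * (P x y * V1 x y a * d1 x a))
        = P x y * ∑ a, l1 * (V1 x y a * d1 x a) := by
      rw [Finset.mul_sum]; exact Finset.sum_congr rfl fun a _ => by ring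
    have c4 : (∑ a, ∑ b, l2 * (P x y * V1 x y a * V2 x y a b * d2 x b))
        = P x y * ∑ a, ∑ b, l2 * (V1 x y a * V2 x y a b * d2 x b) := by
      rw [Finset.mul_sum]
      refine Finset.sum_congr rfl fun a _ => ?_
      rw [Finset.mul_sum]; exact Finset.sum_congr rfl fun b _ => by ring
    rw [c1, c2, c3, c4, ← mul_add, ← mul_add, ← mul_add]
    have hinner : (∑ a, V1 x y a * Real.log (V1 x y a / R1 a))
        + (∑ a, ∑ b, V1 x y a * V2 x y a b * Real.log (V2 x y a b / R2 y a b))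
        + (∑ a, l1 * (V1 x y a * d1 x a))
        + (∑ a, ∑ b, l2 * (V1 x y a * V2 x y a b * d2 x b))
        = -Real.log (S x y) := by
      -- turn single sums into double sums
      have e1 : (∑ a, V1 x y a * Real.log (V1 x y a / R1 a))
          = ∑ a, ∑ b, V1 x y a * V2 x y a b * Real.log (V1 x y a / R1 a) := by
        refine Finset.sum_congr rfl fun a _ => ?_
        calc V1 x y a * Real.log (V1 x y a / R1 a)
            = (∑ b, V2 x y a b) * (V1 x y a * Real.log (V1 x y a / R1 a)) := by
              rw [(hV2chan x y a).2, one_mul]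
          _ = ∑ b, V1 x y a * V2 x y a b * Real.log (V1 x y a / R1 a) := by
              rw [Finset.sum_mul]; exact Finset.sum_congr rfl fun b _ => by ring
      have e3 : (∑ a, l1 * (V1 x y a * d1 x a))
          = ∑ a, ∑ b, V1 x y a * V2 x y a b * (l1 * d1 x a) := by
        refine Finset.sum_congr rfl fun a _ => ?_
        calc l1 * (V1 x y a * d1 x a)
            = (∑ b, V2 x y a b) * (l1 * (V1 x y a * d1 x a)) := by
              rw [(hV2chan x y a).2, one_mul]
          _ = ∑ b, V1 x y a * V2 x y a b * (l1 * d1 x a) := by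
              rw [Finset.sum_mul]; exact Finset.sum_congr rfl fun b _ => by ring
      have e4 : (∑ a, ∑ b, l2 * (V1 x y a * V2 x y a b * d2 x b))
          = ∑ a, ∑ b, V1 x y a * V2 x y a b * (l2 * d2 x b) :=
        Finset.sum_congr rfl fun a _ => Finset.sum_congr rfl fun b _ => by ring
      rw [e1, e3, e4]
      simp only [← Finset.sum_add_distrib]
      have hpt : ∀ a b, (V1 x y a * V2 x y a b * Real.log (V1 x y a / R1 a)
          + V1 x y a * V2 x y a b * Real.log (V2 x y a b / R2 y a b)
          + V1 x y a * V2 x y a b * (l1 * d1 x a)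
          + V1 x y a * V2 x y a b * (l2 * d2 x b))
          = V1 x y a * V2 x y a b * (-Real.log (S x y)) := by
        intro a b
        rcases eq_or_lt_of_le (mul_nonneg ((hV1chan x y).1 a) ((hV2chan x y a).1 b)) with h0 | h0
        · rw [← h0]; ring
        · have hv1 : 0 < V1 x y a := by
            rcases eq_or_lt_of_le ((hV1chan x y).1 a) with h | h
            · exfalso; rw [← h] at h0; simp at h0
            · exact h
          have hv2' : 0 < V2 x y a b := by
            rcases eq_or_lt_of_le ((hV2chan x y a).1 b) with h | h
            · exfalso; rw [← h] at h0; simp at h0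
            · exact h
          obtain ⟨hR1a, hs2a, hform1⟩ := hV1pos hp hv1
          obtain ⟨hR2b, hform2⟩ := hV2pos hs2a hv2'
          have hlogV1 : Real.log (V1 x y a / R1 a)
              = -(l1 * d1 x a) + Real.log (s2 x y a) - Real.log (S x y) := by
            rw [Real.log_div (ne_of_gt hv1) (ne_of_gt hR1a), hform1,
              Real.log_div (by positivity) (ne_of_gt hS),
              Real.log_mul (by positivity) (ne_of_gt hs2a),
              Real.log_mul (ne_of_gt hR1a) (Real.exp_ne_zero _), Real.log_exp]
            ring
          have hlogV2 : Real.log (V2 x y a b / R2 y a b)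
              = -(l2 * d2 x b) - Real.log (s2 x y a) := by
            rw [Real.log_div (ne_of_gt hv2') (ne_of_gt hR2b), hform2,
              Real.log_div (by positivity) (ne_of_gt hs2a),
              Real.log_mul (ne_of_gt hR2b) (Real.exp_ne_zero _), Real.log_exp]
            ring
          rw [hlogV1, hlogV2]
          ring
      rw [Finset.sum_congr rfl fun a _ => Finset.sum_congr rfl fun b _ => hpt a b]
      have : ∀ a, (∑ b, V1 x y a * V2 x y a b * (-Real.log (S x y)))
          = V1 x y a * (-Real.log (S x y)) := by
        intro a
        calc (∑ b, V1 x y a * V2 x y a b * (-Real.log (S x y)))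
            = ∑ b, V2 x y a b * (V1 x y a * (-Real.log (S x y))) :=
              Finset.sum_congr rfl fun b _ => by ring
          _ = (∑ b, V2 x y a b) * (V1 x y a * (-Real.log (S x y))) := by rw [Finset.sum_mul]
          _ = V1 x y a * (-Real.log (S x y)) := by rw [(hV2chan x y a).2, one_mul]
      rw [Finset.sum_congr rfl fun a _ => this a, ← Finset.sum_mul, (hV1chan x y).2, one_mul]
    rw [hinner]
    ring
  -- conclude
  unfold Lag
  have := add_le_add (add_le_add (add_le_add stepA stepB) (le_refl (l1 * Ed1 P V1 d1)))
    (le_refl (l2 * Ed2 P V1 V2 d2))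
  calc I1 P V1 + I2 P V1 V2 + l1 * Ed1 P V1 d1 + l2 * Ed2 P V1 V2 d2
      ≤ (∑ x, ∑ y, ∑ a, P x y * V1 x y a * Real.log (V1 x y a / R1 a))
        + (∑ x, ∑ y, ∑ a, ∑ b, P x y * V1 x y a * V2 x y a b * Real.log (V2 x y a b / R2 y a b))
        + l1 * Ed1 P V1 d1 + l2 * Ed2 P V1 V2 d2 := this
    _ = -∑ x, ∑ y, P x y * Real.log (S x y) := stepC

end Tilted
section KKT

variable {X Y X1 X2 : Type*} [Fintype X] [Fintype Y] [Fintype X1] [Fintype X2]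
variable {P : X → Y → ℝ} {W1 : X → Y → X1 → ℝ} {W2 : X → Y → X1 → X2 → ℝ}
  {d1 : X → X1 → ℝ} {d2 : X → X2 → ℝ} {l1 l2 D1 D2 : ℝ}

set_option maxHeartbeats 1000000 in
lemma kkt (hP : IsPMF2 P) (hd1 : ∀ x a, 0 ≤ d1 x a) (hd2 : ∀ x b, 0 ≤ d2 x b)
    (hdual : DualOpt P d1 d2 D1 D2 l1 l2) (hach : Achieves P d1 d2 D1 D2 W1 W2)
    (a0 : X1) (β : Y → X2) :
    ∑ x, ∑ y, P x y * alpha d1 d2 l1 l2 (pA P W1) (pBgYA P W1 W2) x y *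
      Real.exp (-(l1 * d1 x a0)) * Real.exp (-(l2 * d2 x (β y))) ≤ 1 := by
  classical
  obtain ⟨hW1c, hW2c, hEd1, hEd2, hIRK⟩ := hach
  set Q1 := pA P W1 with hQ1def
  set Q2 := pBgYA P W1 W2 with hQ2def
  set S := SF d1 d2 l1 l2 Q1 Q2 with hSdef
  set Rf : X → Y → ℝ := fun x y => Real.exp (-(l1 * d1 x a0)) * Real.exp (-(l2 * d2 x (β y)))
    with hRfdef
  have hQ1nn : ∀ a, 0 ≤ Q1 a := fun a => pA_nonneg hP.1 hW1c a
  have hQ2nn : ∀ y a b, 0 ≤ Q2 y a b := fun y a b => pBgYA_nonneg hP.1 hW1c hW2c y a b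
  have hQ2s : ∀ y a, ∑ b, Q2 y a b ≤ 1 := fun y a => pBgYA_row_sum_le_one hP.1 hW1c hW2c y a
  have hSnn : ∀ x y, 0 ≤ S x y := fun x y => SF_nonneg hQ1nn hQ2nn x y
  have hSpos : ∀ x y, 0 < P x y → 0 < S x y := fun x y hp => SF_pos hP hW1c hW2c hp
  have hRfpos : ∀ x y, 0 < Rf x y := fun x y => mul_pos (Real.exp_pos _) (Real.exp_pos _)
  -- the key inequality along the perturbation path
  have hpath : ∀ t ∈ Set.Ioo (0:ℝ) 1,
      ∑ x, ∑ y, P x y * Real.log ((1 - t) * S x y + t * Rf x y)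
        ≤ ∑ x, ∑ y, P x y * Real.log (S x y) := by
    intro t ht
    obtain ⟨ht0, ht1⟩ := ht
    have h1t : 0 < 1 - t := by linarith
    set R1t : X1 → ℝ := fun a => (1 - t) * Q1 a + t * (if a = a0 then 1 else 0) with hR1tdef
    set R2t : Y → X1 → X2 → ℝ := fun y a b =>
      ((1 - t) * (Q1 a * Q2 y a b) + t * (if a = a0 ∧ b = β y then 1 else 0)) / R1t a
      with hR2tdef
    have f1 : ∀ a, 0 ≤ R1t a := by
      intro a
      have : (0:ℝ) ≤ (if a = a0 then (1:ℝ) else 0) := by split_ifs <;> norm_num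
      have := hQ1nn a
      simp only [hR1tdef]
      positivity
    have f2 : ∑ a, R1t a = 1 := by
      simp only [hR1tdef]
      rw [Finset.sum_add_distrib, ← Finset.mul_sum, ← Finset.mul_sum, pA_sum hP hW1c,
        Finset.sum_ite_eq' Finset.univ a0 (fun _ => (1:ℝ))]
      simp
    have f3 : ∀ y a b, 0 ≤ R2t y a b := by
      intro y a b
      have h0 : (0:ℝ) ≤ (if a = a0 ∧ b = β y then (1:ℝ) else 0) := by split_ifs <;> norm_num
      have h1 := mul_nonneg (hQ1nn a) (hQ2nn y a b)
      simp only [hR2tdef]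
      have := f1 a
      positivity
    have f4 : ∀ y a, ∑ b, R2t y a b ≤ 1 := by
      intro y a
      simp only [hR2tdef]
      rw [← Finset.sum_div]
      by_cases ha : a = a0
      · have hden : R1t a = (1 - t) * Q1 a + t := by simp [hR1tdef, ha]
        have hnum : ∑ b, ((1 - t) * (Q1 a * Q2 y a b) + t * (if a = a0 ∧ b = β y then 1 else 0))
            = (1 - t) * Q1 a * (∑ b, Q2 y a b) + t := by
          rw [Finset.sum_add_distrib]
          congr 1
          · rw [← Finset.mul_sum]
            rw [← Finset.mul_sum]
            ring
          · rw [← Finset.mul_sum]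
            have : (∑ b, if a = a0 ∧ b = β y then (1:ℝ) else 0) = 1 := by
              simp only [ha, true_and]
              rw [Finset.sum_ite_eq' Finset.univ (β y) (fun _ => (1:ℝ))]
              simp
            rw [this, mul_one]
        rw [hnum, hden]
        have hdenpos : 0 < (1 - t) * Q1 a + t := by
          have := hQ1nn a; positivity
        rw [div_le_one hdenpos]
        have h2 : (1 - t) * Q1 a * (∑ b, Q2 y a b) ≤ (1 - t) * Q1 a * 1 := by
          apply mul_le_mul_of_nonneg_left (hQ2s y a)
          have := hQ1nn a; positivity
        linarith
      · have hden : R1t a = (1 - t) * Q1 a := by simp [hR1tdef, ha]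
        have hnum : ∑ b, ((1 - t) * (Q1 a * Q2 y a b) + t * (if a = a0 ∧ b = β y then 1 else 0))
            = (1 - t) * Q1 a * (∑ b, Q2 y a b) := by
          rw [Finset.sum_add_distrib]
          have hz : (∑ b, t * (if a = a0 ∧ b = β y then (1:ℝ) else 0)) = 0 := by
            apply Finset.sum_eq_zero
            intro b _
            simp [ha]
          rw [hz, add_zero, ← Finset.mul_sum]
          rw [← Finset.mul_sum]
          ring
        rw [hnum, hden]
        rcases eq_or_lt_of_le (hQ1nn a) with hq | hq
        · rw [← hq]
          simp
        · rw [div_le_one (by positivity)]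
          have hmul := mul_le_mul_of_nonneg_left (hQ2s y a)
            (by positivity : (0:ℝ) ≤ (1 - t) * Q1 a)
          nlinarith [hmul]
    have f5 : ∀ y a b, R1t a * R2t y a b
        = (1 - t) * (Q1 a * Q2 y a b) + t * (if a = a0 ∧ b = β y then 1 else 0) := by
      intro y a b
      rcases eq_or_ne (R1t a) 0 with h | h
      · have hposa0 : 0 < R1t a0 := by
          have h1 : R1t a0 = (1 - t) * Q1 a0 + t := by simp [hR1tdef]
          rw [h1]
          nlinarith [hQ1nn a0]
        have ha : a ≠ a0 := by
          intro hc
          rw [hc] at h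
          exact (ne_of_gt hposa0) h
        have hq : Q1 a = 0 := by
          simp only [hR1tdef, if_neg ha] at h
          nlinarith [hQ1nn a]
        rw [h, zero_mul, hq]
        simp [ha]
      · simp only [hR2tdef]
        rw [mul_div_cancel₀ _ h]
    have f6 : ∀ x y, SF d1 d2 l1 l2 R1t R2t x y = (1 - t) * S x y + t * Rf x y := by
      intro x y
      unfold SF s2F
      have hlhs : ∑ a, R1t a * Real.exp (-(l1 * d1 x a)) * (∑ b, R2t y a b * Real.exp (-(l2 * d2 x b)))
          = ∑ a, ∑ b, (R1t a * R2t y a b) * (Real.exp (-(l1 * d1 x a)) * Real.exp (-(l2 * d2 x b))) := by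
        refine Finset.sum_congr rfl fun a _ => ?_
        rw [Finset.mul_sum]
        exact Finset.sum_congr rfl fun b _ => by ring
      rw [hlhs]
      have hterm : ∀ a b, (R1t a * R2t y a b) * (Real.exp (-(l1 * d1 x a)) * Real.exp (-(l2 * d2 x b)))
          = (1 - t) * ((Q1 a * Q2 y a b) * (Real.exp (-(l1 * d1 x a)) * Real.exp (-(l2 * d2 x b))))
          + t * ((if a = a0 ∧ b = β y then 1 else 0) * (Real.exp (-(l1 * d1 x a)) * Real.exp (-(l2 * d2 x b)))) := by
        intro a b
        rw [f5 y a b]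
        ring
      rw [Finset.sum_congr rfl fun a _ => Finset.sum_congr rfl fun b _ => hterm a b]
      simp only [Finset.sum_add_distrib, ← Finset.mul_sum]
      congr 1
      · -- (1-t) * S part
        congr 1
        have hS2 : S x y = ∑ a, ∑ b, (Q1 a * Q2 y a b) * (Real.exp (-(l1 * d1 x a)) * Real.exp (-(l2 * d2 x b))) := by
          rw [hSdef]
          unfold SF s2F
          refine Finset.sum_congr rfl fun a _ => ?_
          rw [Finset.mul_sum]
          exact Finset.sum_congr rfl fun b _ => by ring
        rw [hS2]
      · -- t * Rf part
        congr 1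
        have hind : ∀ a, (∑ b, (if a = a0 ∧ b = β y then (1:ℝ) else 0) * (Real.exp (-(l1 * d1 x a)) * Real.exp (-(l2 * d2 x b))))
            = if a = a0 then Real.exp (-(l1 * d1 x a0)) * Real.exp (-(l2 * d2 x (β y))) else 0 := by
          intro a
          by_cases ha : a = a0
          · subst ha
            simp only [true_and]
            have : ∀ b, (if b = β y then (1:ℝ) else 0) * (Real.exp (-(l1 * d1 x a)) * Real.exp (-(l2 * d2 x b)))
                = if b = β y then Real.exp (-(l1 * d1 x a)) * Real.exp (-(l2 * d2 x b)) else 0 := by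
              intro b; split_ifs <;> simp
            rw [Finset.sum_congr rfl fun b _ => this b,
              Finset.sum_ite_eq' Finset.univ (β y) (fun b => Real.exp (-(l1 * d1 x a)) * Real.exp (-(l2 * d2 x b)))]
            simp
          · simp [ha]
        rw [Finset.sum_congr rfl fun a _ => hind a,
          Finset.sum_ite_eq' Finset.univ a0 (fun _ => Real.exp (-(l1 * d1 x a0)) * Real.exp (-(l2 * d2 x (β y))))]
        simp [hRfdef]
    have f7 : ∀ x y, 0 < P x y → 0 < SF d1 d2 l1 l2 R1t R2t x y := by
      intro x y hp
      rw [f6 x y]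
      have := hSnn x y
      have := hRfpos x y
      positivity
    obtain ⟨V1, V2, hV1c, hV2c, hVle⟩ := tilted hP hW1c hW2c R1t R2t f1 (le_of_eq f2) f3 f4 f7
    have hgold : -∑ x, ∑ y, P x y * Real.log (S x y) ≤ Lag P W1 W2 d1 d2 l1 l2 :=
      golden hP hW1c hW2c
    have hmin : Lag P W1 W2 d1 d2 l1 l2 ≤ Lag P V1 V2 d1 d2 l1 l2 :=
      Lag_min hP hd1 hd2 hdual ⟨hW1c, hW2c, hEd1, hEd2, hIRK⟩ V1 V2 hV1c hV2c
    have hrw : (∑ x, ∑ y, P x y * Real.log (SF d1 d2 l1 l2 R1t R2t x y))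
        = ∑ x, ∑ y, P x y * Real.log ((1 - t) * S x y + t * Rf x y) :=
      Finset.sum_congr rfl fun x _ => Finset.sum_congr rfl fun y _ => by rw [f6 x y]
    rw [hrw] at hVle
    linarith
  -- derivative inequality at each t
  have hstep : ∀ t ∈ Set.Ioo (0:ℝ) 1,
      (∑ x, ∑ y, P x y * ((Rf x y - S x y) / ((1 - t) * S x y + t * Rf x y))) ≤ 0 := by
    intro t ht
    obtain ⟨ht0, ht1⟩ := ht
    have h1t : 0 < 1 - t := by linarith
    have hkey := hpath t ⟨ht0, ht1⟩
    have hper : ∀ x y, P x y * ((Rf x y - S x y) / ((1 - t) * S x y + t * Rf x y)) * t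
        ≤ P x y * (Real.log ((1 - t) * S x y + t * Rf x y) - Real.log (S x y)) := by
      intro x y
      rcases eq_or_lt_of_le (hP.1 x y) with hp | hp
      · rw [← hp]; simp
      · have hS := hSpos x y hp
        have hR := hRfpos x y
        have hSt : 0 < (1 - t) * S x y + t * Rf x y := by positivity
        have hlog : Real.log (S x y / ((1 - t) * S x y + t * Rf x y))
            ≤ S x y / ((1 - t) * S x y + t * Rf x y) - 1 :=
          Real.log_le_sub_one_of_pos (by positivity)
        rw [Real.log_div (ne_of_gt hS) (ne_of_gt hSt)] at hlog
        have hfrac : (Rf x y - S x y) / ((1 - t) * S x y + t * Rf x y) * t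
            = 1 - S x y / ((1 - t) * S x y + t * Rf x y) := by
          field_simp
          ring
        have hmain : (Rf x y - S x y) / ((1 - t) * S x y + t * Rf x y) * t
            ≤ Real.log ((1 - t) * S x y + t * Rf x y) - Real.log (S x y) := by
          rw [hfrac]; linarith
        calc P x y * ((Rf x y - S x y) / ((1 - t) * S x y + t * Rf x y)) * t
            = P x y * ((Rf x y - S x y) / ((1 - t) * S x y + t * Rf x y) * t) := by ring
          _ ≤ P x y * (Real.log ((1 - t) * S x y + t * Rf x y) - Real.log (S x y)) :=
            mul_le_mul_of_nonneg_left hmain hp.le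
    have hsum : (∑ x, ∑ y, P x y * ((Rf x y - S x y) / ((1 - t) * S x y + t * Rf x y))) * t
        ≤ 0 := by
      have h1 : (∑ x, ∑ y, P x y * ((Rf x y - S x y) / ((1 - t) * S x y + t * Rf x y)) * t)
          ≤ ∑ x, ∑ y, P x y * (Real.log ((1 - t) * S x y + t * Rf x y) - Real.log (S x y)) :=
        Finset.sum_le_sum fun x _ => Finset.sum_le_sum fun y _ => hper x y
      have h2 : (∑ x, ∑ y, P x y * (Real.log ((1 - t) * S x y + t * Rf x y) - Real.log (S x y)))
          = (∑ x, ∑ y, P x y * Real.log ((1 - t) * S x y + t * Rf x y))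
            - (∑ x, ∑ y, P x y * Real.log (S x y)) := by
        rw [← Finset.sum_sub_distrib]
        refine Finset.sum_congr rfl fun x _ => ?_
        rw [← Finset.sum_sub_distrib]
        exact Finset.sum_congr rfl fun y _ => by ring
      have h3 : (∑ x, ∑ y, P x y * ((Rf x y - S x y) / ((1 - t) * S x y + t * Rf x y)) * t)
          = (∑ x, ∑ y, P x y * ((Rf x y - S x y) / ((1 - t) * S x y + t * Rf x y))) * t := by
        rw [Finset.sum_mul]
        refine Finset.sum_congr rfl fun x _ => ?_
        rw [Finset.sum_mul]
      rw [h3, h2] at h1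
      linarith
    by_contra hc
    push_neg at hc
    nlinarith
  -- take the limit t → 0⁺
  have hlimit : (∑ x, ∑ y, P x y * ((Rf x y - S x y) / S x y)) ≤ 0 := by
    have htend : Filter.Tendsto
        (fun t : ℝ => ∑ x, ∑ y, P x y * ((Rf x y - S x y) / ((1 - t) * S x y + t * Rf x y)))
        (nhdsWithin 0 (Set.Ioi 0))
        (nhds (∑ x, ∑ y, P x y * ((Rf x y - S x y) / S x y))) := by
      refine Filter.Tendsto.mono_left ?_ nhdsWithin_le_nhds
      apply tendsto_finset_sum
      intro x _
      apply tendsto_finset_sum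
      intro y _
      rcases eq_or_lt_of_le (hP.1 x y) with hp | hp
      · have hv : P x y * ((Rf x y - S x y) / S x y) = 0 := by rw [← hp]; ring
        have hfn : (fun t : ℝ => P x y * ((Rf x y - S x y) / ((1 - t) * S x y + t * Rf x y)))
            = fun _ => 0 := funext fun t => by rw [← hp]; ring
        rw [hv, hfn]
        exact tendsto_const_nhds
      · have hS := hSpos x y hp
        have hcont : Filter.Tendsto (fun t : ℝ => (1 - t) * S x y + t * Rf x y)
            (nhds 0) (nhds (S x y)) := by
          have hc : Continuous fun t : ℝ => (1 - t) * S x y + t * Rf x y := by continuity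
          have h0 := hc.tendsto 0
          simpa using h0
        have hdiv : Filter.Tendsto
            (fun t : ℝ => (Rf x y - S x y) / ((1 - t) * S x y + t * Rf x y))
            (nhds 0) (nhds ((Rf x y - S x y) / S x y)) :=
          Filter.Tendsto.div tendsto_const_nhds hcont (ne_of_gt hS)
        exact hdiv.const_mul (P x y)
    refine le_of_tendsto htend ?_
    filter_upwards [Ioo_mem_nhdsGT_of_mem (Set.mem_Ico.mpr ⟨le_refl (0:ℝ), zero_lt_one⟩)]
      with t ht
    exact hstep t ht
  -- conclusion
  have hfinal : (∑ x, ∑ y, P x y * alpha d1 d2 l1 l2 Q1 Q2 x y *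
        Real.exp (-(l1 * d1 x a0)) * Real.exp (-(l2 * d2 x (β y))))
      = (∑ x, ∑ y, P x y * ((Rf x y - S x y) / S x y)) + ∑ x, ∑ y, P x y := by
    rw [← Finset.sum_add_distrib]
    refine Finset.sum_congr rfl fun x _ => ?_
    rw [← Finset.sum_add_distrib]
    refine Finset.sum_congr rfl fun y _ => ?_
    rcases eq_or_lt_of_le (hP.1 x y) with hp | hp
    · rw [← hp]; ring
    · have hS := hSpos x y hp
      have expand : P x y * ((Rf x y - S x y) / S x y) + P x y
          = P x y * (S x y)⁻¹ * Rf x y := by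
        field_simp
        ring
      rw [alpha_eq, ← hSdef, expand]
      simp only [hRfdef]
      ring
  rw [hfinal]
  have hPs : ∑ x, ∑ y, P x y = 1 := hP.2
  rw [hPs]
  linarith

end KKT
set_option maxHeartbeats 1600000 in
/-- non-asymptotic converse bound for blocklength-`n` codes
for the Kaspi problem with a memoryless source. -/
theorem n_shot_converse
    {X Y X1 X2 : Type*} [Fintype X] [Fintype Y] [Fintype X1] [Fintype X2]
    (P : X → Y → ℝ) (d1 : X → X1 → ℝ) (d2 : X → X2 → ℝ) (D1 D2 l1 l2 : ℝ)
    (hP : IsPMF2 P)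
    (hd1 : ∀ x a, 0 ≤ d1 x a) (hd2 : ∀ x b, 0 ≤ d2 x b)
    -- `λ₁*, λ₂*` are dual-optimal multipliers
    (hdual : DualOpt P d1 d2 D1 D2 l1 l2)
    -- a fixed pair of test channels achieving `R_K(P_{XY},D₁,D₂)`
    (W1 : X → Y → X1 → ℝ) (W2 : X → Y → X1 → X2 → ℝ)
    (hach : Achieves P d1 d2 D1 D2 W1 W2)
    -- an arbitrary (n,M)-code: encoder `f`, decoders `g1`, `g2`
    (n M : ℕ) (hn : 0 < n) (hM : 0 < M)
    (f : (Fin n → X) → (Fin n → Y) → Fin M)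
    (g1 : Fin M → (Fin n → X1)) (g2 : Fin M → (Fin n → Y) → (Fin n → X2))
    (γ : ℝ) (hγ : 0 ≤ γ) :
    -- ε_nᴷ(D₁,D₂) ≥ Pr[ Σᵢ j_K(Xᵢ,Yᵢ) ≥ log M + nγ ] − exp(−nγ)
    (∑ xs : Fin n → X, ∑ ys : Fin n → Y, (∏ i, P (xs i) (ys i)) *
        (if D1 < (n : ℝ)⁻¹ * ∑ i, d1 (xs i) (g1 (f xs ys) i)
            ∨ D2 < (n : ℝ)⁻¹ * ∑ i, d2 (xs i) (g2 (f xs ys) ys i) then 1 else 0))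
    ≥ (∑ xs : Fin n → X, ∑ ys : Fin n → Y, (∏ i, P (xs i) (ys i)) *
        (if Real.log M + n * γ ≤
            ∑ i, jK d1 d2 l1 l2 D1 D2 (pA P W1) (pBgYA P W1 W2) (xs i) (ys i)
          then 1 else 0))
      - Real.exp (-(n * γ)) := by
  classical
  have hexppos := Real.exp_pos (-((n:ℝ) * γ))
  -- degenerate cases: empty alphabets
  rcases isEmpty_or_nonempty X with hX | hX
  · haveI : IsEmpty (Fin n → X) := ⟨fun xs => hX.false (xs ⟨0, hn⟩)⟩
    rw [Finset.univ_eq_empty, Finset.sum_empty, Finset.sum_empty]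
    linarith
  rcases isEmpty_or_nonempty Y with hY | hY
  · haveI : IsEmpty (Fin n → Y) := ⟨fun ys => hY.false (ys ⟨0, hn⟩)⟩
    have e : ∀ (F : (Fin n → X) → (Fin n → Y) → ℝ),
        (∑ xs : Fin n → X, ∑ ys : Fin n → Y, F xs ys) = 0 := fun F =>
      Finset.sum_eq_zero fun xs _ => by rw [Finset.univ_eq_empty, Finset.sum_empty]
    rw [e, e]
    linarith
  haveI hX2 : Nonempty X2 := ⟨g2 ⟨0, hM⟩ (fun _ => Classical.arbitrary Y) ⟨0, hn⟩⟩
  have hW1c : IsChan1 W1 := hach.1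
  have hW2c : IsChan2 W2 := hach.2.1
  have hl1 : 0 ≤ l1 := hdual.1
  have hl2 : 0 ≤ l2 := hdual.2.1
  have hMpos : (0:ℝ) < (M:ℝ) := by exact_mod_cast hM
  have hnpos : (0:ℝ) < (n:ℝ) := by exact_mod_cast hn
  have halphann : ∀ x y, 0 ≤ alpha d1 d2 l1 l2 (pA P W1) (pBgYA P W1 W2) x y := by
    intro x y
    rw [alpha_eq]
    exact inv_nonneg.mpr (SF_nonneg (fun a => pA_nonneg hP.1 hW1c a)
      (fun y a b => pBgYA_nonneg hP.1 hW1c hW2c y a b) x y)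
  have halphapos : ∀ x y, 0 < P x y → 0 < alpha d1 d2 l1 l2 (pA P W1) (pBgYA P W1 W2) x y := by
    intro x y hp
    rw [alpha_eq]
    exact inv_pos.mpr (SF_pos hP hW1c hW2c hp)
  -- single-letter kernel N and its kkt bound
  set N : Y → X1 → X2 → ℝ := fun y a b =>
    ∑ x, P x y * alpha d1 d2 l1 l2 (pA P W1) (pBgYA P W1 W2) x y *
      Real.exp (-(l1 * d1 x a)) * Real.exp (-(l2 * d2 x b)) with hNdef
  have hNnn : ∀ y a b, 0 ≤ N y a b := by
    intro y a b
    simp only [hNdef]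
    exact Finset.sum_nonneg fun x _ => by
      have := hP.1 x y
      have := halphann x y
      positivity
  have hNsum : ∀ (a : X1) (β : Y → X2), (∑ y, N y a (β y)) ≤ 1 := by
    intro a β
    have hk := kkt hP hd1 hd2 hdual hach a β
    calc (∑ y, N y a (β y))
        = ∑ y, ∑ x, P x y * alpha d1 d2 l1 l2 (pA P W1) (pBgYA P W1 W2) x y *
            Real.exp (-(l1 * d1 x a)) * Real.exp (-(l2 * d2 x (β y))) := rfl
      _ = ∑ x, ∑ y, P x y * alpha d1 d2 l1 l2 (pA P W1) (pBgYA P W1 W2) x y *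
            Real.exp (-(l1 * d1 x a)) * Real.exp (-(l2 * d2 x (β y))) := Finset.sum_comm
      _ ≤ 1 := hk
  -- choose per-letter maximizers
  have hmaxex : ∀ (a : X1) (y : Y), ∃ b, ∀ b', N y a b' ≤ N y a b := by
    intro a y
    obtain ⟨b, _, hb⟩ := Finset.exists_max_image (Finset.univ : Finset X2) (N y a)
      ⟨Classical.arbitrary X2, Finset.mem_univ _⟩
    exact ⟨b, fun b' => hb b' (Finset.mem_univ b')⟩
  choose Nmax hNmax using hmaxex
  -- step n1: indicator comparison
  have key : (∑ xs : Fin n → X, ∑ ys : Fin n → Y, (∏ i, P (xs i) (ys i)) *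
        (if Real.log M + n * γ ≤
            ∑ i, jK d1 d2 l1 l2 D1 D2 (pA P W1) (pBgYA P W1 W2) (xs i) (ys i)
          then 1 else 0))
      - (∑ xs : Fin n → X, ∑ ys : Fin n → Y, (∏ i, P (xs i) (ys i)) *
        (if D1 < (n : ℝ)⁻¹ * ∑ i, d1 (xs i) (g1 (f xs ys) i)
            ∨ D2 < (n : ℝ)⁻¹ * ∑ i, d2 (xs i) (g2 (f xs ys) ys i) then 1 else 0))
      ≤ ∑ xs : Fin n → X, ∑ ys : Fin n → Y, (∏ i, P (xs i) (ys i)) *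
        (if (Real.log M + n * γ ≤
            ∑ i, jK d1 d2 l1 l2 D1 D2 (pA P W1) (pBgYA P W1 W2) (xs i) (ys i))
          ∧ ¬(D1 < (n : ℝ)⁻¹ * ∑ i, d1 (xs i) (g1 (f xs ys) i)
            ∨ D2 < (n : ℝ)⁻¹ * ∑ i, d2 (xs i) (g2 (f xs ys) ys i)) then 1 else 0) := by
    rw [← Finset.sum_sub_distrib]
    refine Finset.sum_le_sum fun xs _ => ?_
    rw [← Finset.sum_sub_distrib]
    refine Finset.sum_le_sum fun ys _ => ?_
    have hPn : (0:ℝ) ≤ ∏ i, P (xs i) (ys i) :=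
      Finset.prod_nonneg fun i _ => hP.1 _ _
    split_ifs <;> first | tauto | linarith
  -- step1: pointwise change of measure
  have step1 : ∀ (xs : Fin n → X) (ys : Fin n → Y),
      (∏ i, P (xs i) (ys i)) *
        (if (Real.log M + n * γ ≤
            ∑ i, jK d1 d2 l1 l2 D1 D2 (pA P W1) (pBgYA P W1 W2) (xs i) (ys i))
          ∧ ¬(D1 < (n : ℝ)⁻¹ * ∑ i, d1 (xs i) (g1 (f xs ys) i)
            ∨ D2 < (n : ℝ)⁻¹ * ∑ i, d2 (xs i) (g2 (f xs ys) ys i)) then 1 else 0)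
      ≤ ((M:ℝ) * Real.exp ((n:ℝ) * γ))⁻¹ *
        ∏ i, (P (xs i) (ys i) * alpha d1 d2 l1 l2 (pA P W1) (pBgYA P W1 W2) (xs i) (ys i) *
          Real.exp (-(l1 * d1 (xs i) (g1 (f xs ys) i))) *
          Real.exp (-(l2 * d2 (xs i) (g2 (f xs ys) ys i)))) := by
    intro xs ys
    have hcpos : (0:ℝ) < (M:ℝ) * Real.exp ((n:ℝ) * γ) := by positivity
    have hfac_nn : ∀ i : Fin n, (0:ℝ) ≤
        P (xs i) (ys i) * alpha d1 d2 l1 l2 (pA P W1) (pBgYA P W1 W2) (xs i) (ys i) *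
          Real.exp (-(l1 * d1 (xs i) (g1 (f xs ys) i))) *
          Real.exp (-(l2 * d2 (xs i) (g2 (f xs ys) ys i))) := by
      intro i
      have := hP.1 (xs i) (ys i)
      have := halphann (xs i) (ys i)
      positivity
    have hRHS_nn : (0:ℝ) ≤ ((M:ℝ) * Real.exp ((n:ℝ) * γ))⁻¹ *
        ∏ i, (P (xs i) (ys i) * alpha d1 d2 l1 l2 (pA P W1) (pBgYA P W1 W2) (xs i) (ys i) *
          Real.exp (-(l1 * d1 (xs i) (g1 (f xs ys) i))) *
          Real.exp (-(l2 * d2 (xs i) (g2 (f xs ys) ys i)))) :=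
      mul_nonneg (inv_nonneg.mpr hcpos.le) (Finset.prod_nonneg fun i _ => hfac_nn i)
    split_ifs with h
    · rcases eq_or_lt_of_le (Finset.prod_nonneg (fun (i : Fin n) _ => hP.1 (xs i) (ys i)) :
          (0:ℝ) ≤ ∏ i, P (xs i) (ys i)) with hpz | hpz
      · rw [mul_one, ← hpz]
        exact hRHS_nn
      · have hPi : ∀ i : Fin n, 0 < P (xs i) (ys i) := by
          intro i
          have hne : (∏ i, P (xs i) (ys i)) ≠ 0 := ne_of_gt hpz
          have := Finset.prod_ne_zero_iff.mp hne i (Finset.mem_univ i)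
          exact lt_of_le_of_ne (hP.1 _ _) (Ne.symm this)
        have halphai : ∀ i : Fin n,
            0 < alpha d1 d2 l1 l2 (pA P W1) (pBgYA P W1 W2) (xs i) (ys i) :=
          fun i => halphapos _ _ (hPi i)
        obtain ⟨hJ, hnexc⟩ := h
        push_neg at hnexc
        obtain ⟨hd1le, hd2le⟩ := hnexc
        have hs1 : (∑ i, d1 (xs i) (g1 (f xs ys) i)) ≤ (n:ℝ) * D1 := by
          rw [inv_mul_le_iff₀ hnpos] at hd1le
          linarith [hd1le]
        have hs2 : (∑ i, d2 (xs i) (g2 (f xs ys) ys i)) ≤ (n:ℝ) * D2 := by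
          rw [inv_mul_le_iff₀ hnpos] at hd2le
          linarith [hd2le]
        have hjeq : (∑ i, jK d1 d2 l1 l2 D1 D2 (pA P W1) (pBgYA P W1 W2) (xs i) (ys i))
            = (∑ i, Real.log (alpha d1 d2 l1 l2 (pA P W1) (pBgYA P W1 W2) (xs i) (ys i)))
              - (n:ℝ) * (l1 * D1) - (n:ℝ) * (l2 * D2) := by
          unfold jK
          rw [Finset.sum_sub_distrib, Finset.sum_sub_distrib, Finset.sum_const,
            Finset.sum_const, Finset.card_univ, Fintype.card_fin]
          push_cast
          ring
        rw [hjeq] at hJ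
        -- the product lower bound
        have hprod_split : (∏ i, (P (xs i) (ys i) *
              alpha d1 d2 l1 l2 (pA P W1) (pBgYA P W1 W2) (xs i) (ys i) *
              Real.exp (-(l1 * d1 (xs i) (g1 (f xs ys) i))) *
              Real.exp (-(l2 * d2 (xs i) (g2 (f xs ys) ys i)))))
            = (∏ i, P (xs i) (ys i)) *
              ∏ i, (alpha d1 d2 l1 l2 (pA P W1) (pBgYA P W1 W2) (xs i) (ys i) *
                Real.exp (-(l1 * d1 (xs i) (g1 (f xs ys) i))) *
                Real.exp (-(l2 * d2 (xs i) (g2 (f xs ys) ys i)))) := by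
          rw [← Finset.prod_mul_distrib]
          exact Finset.prod_congr rfl fun i _ => by ring
        have hGe : (M:ℝ) * Real.exp ((n:ℝ) * γ) ≤
            ∏ i, (alpha d1 d2 l1 l2 (pA P W1) (pBgYA P W1 W2) (xs i) (ys i) *
              Real.exp (-(l1 * d1 (xs i) (g1 (f xs ys) i))) *
              Real.exp (-(l2 * d2 (xs i) (g2 (f xs ys) ys i)))) := by
          have hexp_form : (∏ i, (alpha d1 d2 l1 l2 (pA P W1) (pBgYA P W1 W2) (xs i) (ys i) *
              Real.exp (-(l1 * d1 (xs i) (g1 (f xs ys) i))) *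
              Real.exp (-(l2 * d2 (xs i) (g2 (f xs ys) ys i)))))
              = Real.exp ((∑ i, Real.log (alpha d1 d2 l1 l2 (pA P W1) (pBgYA P W1 W2) (xs i) (ys i)))
                + (∑ i, -(l1 * d1 (xs i) (g1 (f xs ys) i)))
                + (∑ i, -(l2 * d2 (xs i) (g2 (f xs ys) ys i)))) := by
            rw [Real.exp_add, Real.exp_add, Real.exp_sum, Real.exp_sum, Real.exp_sum,
              ← Finset.prod_mul_distrib, ← Finset.prod_mul_distrib]
            refine Finset.prod_congr rfl fun i _ => ?_
            rw [Real.exp_log (halphai i)]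
          rw [hexp_form]
          have hfirst : (M:ℝ) * Real.exp ((n:ℝ) * γ) = Real.exp (Real.log (M:ℝ) + (n:ℝ) * γ) := by
            rw [Real.exp_add, Real.exp_log hMpos]
          rw [hfirst]
          apply Real.exp_le_exp.mpr
          have hb1 : l1 * (∑ i, d1 (xs i) (g1 (f xs ys) i)) ≤ l1 * ((n:ℝ) * D1) :=
            mul_le_mul_of_nonneg_left hs1 hl1
          have hb2 : l2 * (∑ i, d2 (xs i) (g2 (f xs ys) ys i)) ≤ l2 * ((n:ℝ) * D2) :=
            mul_le_mul_of_nonneg_left hs2 hl2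
          have he1 : (∑ i, -(l1 * d1 (xs i) (g1 (f xs ys) i)))
              = -(l1 * (∑ i, d1 (xs i) (g1 (f xs ys) i))) := by
            rw [Finset.mul_sum]
            rw [← Finset.sum_neg_distrib]
          have he2 : (∑ i, -(l2 * d2 (xs i) (g2 (f xs ys) ys i)))
              = -(l2 * (∑ i, d2 (xs i) (g2 (f xs ys) ys i))) := by
            rw [Finset.mul_sum]
            rw [← Finset.sum_neg_distrib]
          rw [he1, he2]
          linarith
        rw [mul_one, hprod_split]
        calc (∏ i, P (xs i) (ys i))
            = ((M:ℝ) * Real.exp ((n:ℝ) * γ))⁻¹ *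
              ((∏ i, P (xs i) (ys i)) * ((M:ℝ) * Real.exp ((n:ℝ) * γ))) := by
              field_simp
          _ ≤ ((M:ℝ) * Real.exp ((n:ℝ) * γ))⁻¹ *
              ((∏ i, P (xs i) (ys i)) *
                ∏ i, (alpha d1 d2 l1 l2 (pA P W1) (pBgYA P W1 W2) (xs i) (ys i) *
                  Real.exp (-(l1 * d1 (xs i) (g1 (f xs ys) i))) *
                  Real.exp (-(l2 * d2 (xs i) (g2 (f xs ys) ys i))))) := by
              refine mul_le_mul_of_nonneg_left ?_ (inv_nonneg.mpr hcpos.le)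
              exact mul_le_mul_of_nonneg_left hGe hpz.le
          _ = ((M:ℝ) * Real.exp ((n:ℝ) * γ))⁻¹ *
              ((∏ i, P (xs i) (ys i)) *
                ∏ i, (alpha d1 d2 l1 l2 (pA P W1) (pBgYA P W1 W2) (xs i) (ys i) *
                  Real.exp (-(l1 * d1 (xs i) (g1 (f xs ys) i))) *
                  Real.exp (-(l2 * d2 (xs i) (g2 (f xs ys) ys i))))) := rfl
    · rw [mul_zero]
      exact hRHS_nn
  -- step 2: sum over messages
  have step2 : (∑ xs : Fin n → X, ∑ ys : Fin n → Y,
      ∏ i, (P (xs i) (ys i) * alpha d1 d2 l1 l2 (pA P W1) (pBgYA P W1 W2) (xs i) (ys i) *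
        Real.exp (-(l1 * d1 (xs i) (g1 (f xs ys) i))) *
        Real.exp (-(l2 * d2 (xs i) (g2 (f xs ys) ys i)))))
      ≤ ∑ m : Fin M, ∑ ys : Fin n → Y, ∑ xs : Fin n → X,
        ∏ i, (P (xs i) (ys i) * alpha d1 d2 l1 l2 (pA P W1) (pBgYA P W1 W2) (xs i) (ys i) *
          Real.exp (-(l1 * d1 (xs i) (g1 m i))) *
          Real.exp (-(l2 * d2 (xs i) (g2 m ys i)))) := by
    have hfacnn : ∀ (m : Fin M) (xs : Fin n → X) (ys : Fin n → Y) (i : Fin n),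
        (0:ℝ) ≤ P (xs i) (ys i) * alpha d1 d2 l1 l2 (pA P W1) (pBgYA P W1 W2) (xs i) (ys i) *
          Real.exp (-(l1 * d1 (xs i) (g1 m i))) *
          Real.exp (-(l2 * d2 (xs i) (g2 m ys i))) := by
      intro m xs ys i
      have := hP.1 (xs i) (ys i)
      have := halphann (xs i) (ys i)
      positivity
    calc (∑ xs : Fin n → X, ∑ ys : Fin n → Y,
        ∏ i, (P (xs i) (ys i) * alpha d1 d2 l1 l2 (pA P W1) (pBgYA P W1 W2) (xs i) (ys i) *
          Real.exp (-(l1 * d1 (xs i) (g1 (f xs ys) i))) *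
          Real.exp (-(l2 * d2 (xs i) (g2 (f xs ys) ys i)))))
        ≤ ∑ xs : Fin n → X, ∑ ys : Fin n → Y, ∑ m : Fin M,
          ∏ i, (P (xs i) (ys i) * alpha d1 d2 l1 l2 (pA P W1) (pBgYA P W1 W2) (xs i) (ys i) *
            Real.exp (-(l1 * d1 (xs i) (g1 m i))) *
            Real.exp (-(l2 * d2 (xs i) (g2 m ys i)))) := by
          refine Finset.sum_le_sum fun xs _ => Finset.sum_le_sum fun ys _ => ?_
          exact Finset.single_le_sum
            (fun m _ => Finset.prod_nonneg fun i _ => hfacnn m xs ys i)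
            (Finset.mem_univ (f xs ys))
      _ = ∑ m : Fin M, ∑ xs : Fin n → X, ∑ ys : Fin n → Y,
          ∏ i, (P (xs i) (ys i) * alpha d1 d2 l1 l2 (pA P W1) (pBgYA P W1 W2) (xs i) (ys i) *
            Real.exp (-(l1 * d1 (xs i) (g1 m i))) *
            Real.exp (-(l2 * d2 (xs i) (g2 m ys i)))) := sum_swap3 _
      _ = ∑ m : Fin M, ∑ ys : Fin n → Y, ∑ xs : Fin n → X,
          ∏ i, (P (xs i) (ys i) * alpha d1 d2 l1 l2 (pA P W1) (pBgYA P W1 W2) (xs i) (ys i) *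
            Real.exp (-(l1 * d1 (xs i) (g1 m i))) *
            Real.exp (-(l2 * d2 (xs i) (g2 m ys i)))) :=
          Finset.sum_congr rfl fun m _ => Finset.sum_comm
  -- step 3: per-message bound
  have step3 : ∀ m : Fin M, (∑ ys : Fin n → Y, ∑ xs : Fin n → X,
      ∏ i, (P (xs i) (ys i) * alpha d1 d2 l1 l2 (pA P W1) (pBgYA P W1 W2) (xs i) (ys i) *
        Real.exp (-(l1 * d1 (xs i) (g1 m i))) *
        Real.exp (-(l2 * d2 (xs i) (g2 m ys i))))) ≤ 1 := by
    intro m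
    have inner : ∀ ys : Fin n → Y, (∑ xs : Fin n → X,
        ∏ i, (P (xs i) (ys i) * alpha d1 d2 l1 l2 (pA P W1) (pBgYA P W1 W2) (xs i) (ys i) *
          Real.exp (-(l1 * d1 (xs i) (g1 m i))) *
          Real.exp (-(l2 * d2 (xs i) (g2 m ys i)))))
        = ∏ i, N (ys i) (g1 m i) (g2 m ys i) := by
      intro ys
      have hps := Finset.prod_univ_sum (fun _ : Fin n => (Finset.univ : Finset X))
        (fun i x => P x (ys i) * alpha d1 d2 l1 l2 (pA P W1) (pBgYA P W1 W2) x (ys i) *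
          Real.exp (-(l1 * d1 x (g1 m i))) * Real.exp (-(l2 * d2 x (g2 m ys i))))
      rw [Fintype.piFinset_univ] at hps
      rw [← hps]
    calc (∑ ys : Fin n → Y, ∑ xs : Fin n → X,
        ∏ i, (P (xs i) (ys i) * alpha d1 d2 l1 l2 (pA P W1) (pBgYA P W1 W2) (xs i) (ys i) *
          Real.exp (-(l1 * d1 (xs i) (g1 m i))) *
          Real.exp (-(l2 * d2 (xs i) (g2 m ys i)))))
        = ∑ ys : Fin n → Y, ∏ i, N (ys i) (g1 m i) (g2 m ys i) :=
          Finset.sum_congr rfl fun ys _ => inner ys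
      _ ≤ ∑ ys : Fin n → Y, ∏ i, N (ys i) (g1 m i) (Nmax (g1 m i) (ys i)) := by
          refine Finset.sum_le_sum fun ys _ => ?_
          exact Finset.prod_le_prod (fun i _ => hNnn _ _ _)
            (fun i _ => hNmax (g1 m i) (ys i) (g2 m ys i))
      _ = ∏ i, ∑ y, N y (g1 m i) (Nmax (g1 m i) y) := by
          have hps := Finset.prod_univ_sum (fun _ : Fin n => (Finset.univ : Finset Y))
            (fun i y => N y (g1 m i) (Nmax (g1 m i) y))
          rw [Fintype.piFinset_univ] at hps
          rw [← hps]
      _ ≤ 1 := by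
          apply Finset.prod_le_one
          · intro i _
            exact Finset.sum_nonneg fun y _ => hNnn _ _ _
          · intro i _
            exact hNsum (g1 m i) (Nmax (g1 m i))
  -- final assembly
  have hcpos : (0:ℝ) < (M:ℝ) * Real.exp ((n:ℝ) * γ) := by positivity
  have main : (∑ xs : Fin n → X, ∑ ys : Fin n → Y, (∏ i, P (xs i) (ys i)) *
      (if (Real.log M + n * γ ≤
          ∑ i, jK d1 d2 l1 l2 D1 D2 (pA P W1) (pBgYA P W1 W2) (xs i) (ys i))
        ∧ ¬(D1 < (n : ℝ)⁻¹ * ∑ i, d1 (xs i) (g1 (f xs ys) i)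
          ∨ D2 < (n : ℝ)⁻¹ * ∑ i, d2 (xs i) (g2 (f xs ys) ys i)) then 1 else 0))
      ≤ Real.exp (-((n:ℝ) * γ)) := by
    calc (∑ xs : Fin n → X, ∑ ys : Fin n → Y, (∏ i, P (xs i) (ys i)) *
        (if (Real.log M + n * γ ≤
            ∑ i, jK d1 d2 l1 l2 D1 D2 (pA P W1) (pBgYA P W1 W2) (xs i) (ys i))
          ∧ ¬(D1 < (n : ℝ)⁻¹ * ∑ i, d1 (xs i) (g1 (f xs ys) i)
            ∨ D2 < (n : ℝ)⁻¹ * ∑ i, d2 (xs i) (g2 (f xs ys) ys i)) then 1 else 0))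
        ≤ ∑ xs : Fin n → X, ∑ ys : Fin n → Y, ((M:ℝ) * Real.exp ((n:ℝ) * γ))⁻¹ *
          ∏ i, (P (xs i) (ys i) * alpha d1 d2 l1 l2 (pA P W1) (pBgYA P W1 W2) (xs i) (ys i) *
            Real.exp (-(l1 * d1 (xs i) (g1 (f xs ys) i))) *
            Real.exp (-(l2 * d2 (xs i) (g2 (f xs ys) ys i)))) :=
          Finset.sum_le_sum fun xs _ => Finset.sum_le_sum fun ys _ => step1 xs ys
      _ = ((M:ℝ) * Real.exp ((n:ℝ) * γ))⁻¹ *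
          ∑ xs : Fin n → X, ∑ ys : Fin n → Y,
            ∏ i, (P (xs i) (ys i) * alpha d1 d2 l1 l2 (pA P W1) (pBgYA P W1 W2) (xs i) (ys i) *
              Real.exp (-(l1 * d1 (xs i) (g1 (f xs ys) i))) *
              Real.exp (-(l2 * d2 (xs i) (g2 (f xs ys) ys i)))) := by
          rw [Finset.mul_sum]
          refine Finset.sum_congr rfl fun xs _ => ?_
          rw [Finset.mul_sum]
      _ ≤ ((M:ℝ) * Real.exp ((n:ℝ) * γ))⁻¹ *
          ∑ m : Fin M, ∑ ys : Fin n → Y, ∑ xs : Fin n → X,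
            ∏ i, (P (xs i) (ys i) * alpha d1 d2 l1 l2 (pA P W1) (pBgYA P W1 W2) (xs i) (ys i) *
              Real.exp (-(l1 * d1 (xs i) (g1 m i))) *
              Real.exp (-(l2 * d2 (xs i) (g2 m ys i)))) :=
          mul_le_mul_of_nonneg_left step2 (inv_nonneg.mpr hcpos.le)
      _ ≤ ((M:ℝ) * Real.exp ((n:ℝ) * γ))⁻¹ * ∑ _m : Fin M, (1:ℝ) :=
          mul_le_mul_of_nonneg_left (Finset.sum_le_sum fun m _ => step3 m)
            (inv_nonneg.mpr hcpos.le)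
      _ = ((M:ℝ) * Real.exp ((n:ℝ) * γ))⁻¹ * (M:ℝ) := by
          rw [Finset.sum_const, Finset.card_univ, Fintype.card_fin]
          simp
      _ = Real.exp (-((n:ℝ) * γ)) := by
          rw [Real.exp_neg]
          field_simp
  linarith [key, main]
end Kaspi
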